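/- arXiv:2410.14510 — 6 statements merged into one kernel-verified Lean document; each statement's English description precedes it below -/
import Mathlib

section
/- Let G be a group, p a prime, and m, n ≥ 1 integers. Fix a set R of representatives of the orbits of the simultaneous conjugation action of G on G_{n,p}. Then the map from the disjoint union, over (g_1, …, g_n) ∈ R, of the orbit sets C⟨g_1,…,g_n⟩ \ C⟨g_1,…,g_n⟩_{m,p} to G \ G_{m+n,p}, which sends the class of an m-tuple (x_1, …, x_m) of pairwise commuting p-power order elements of the centralizer C⟨g_1,…,g_n⟩ to the G-conjugacy class of the (m+n)-tuple (x_1, …, x_m, g_1, …, g_n), is well defined and bijective. -/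
/-- `pTuples G p n` is the set `G_{n,p}` of `n`-tuples of pairwise commuting elements
of `G`, each of order a power of `p`. -/
def pTuples (G : Type*) [Group G] (p n : ℕ) : Set (Fin n → G) :=
  {v | (∀ i j, Commute (v i) (v j)) ∧ ∀ i, ∃ k : ℕ, orderOf (v i) = p ^ k}

/-- Simultaneous conjugation relation on a set of tuples. -/
def tupleConj {G : Type*} [Group G] {n : ℕ} (s : Set (Fin n → G)) (a b : s) : Prop :=
  ∃ g : G, ∀ i, g * a.1 i * g⁻¹ = b.1 i

/-- The centralizer in `G` of the subgroup generated by the entries of a tuple. -/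
def tupleCentralizer {G : Type*} [Group G] {n : ℕ} (v : Fin n → G) : Subgroup G :=
  Subgroup.centralizer (Subgroup.closure (Set.range v) : Set G)

lemma mem_tupleCentralizer_iff {G : Type*} [Group G] {n : ℕ} {r : Fin n → G} {c : G} :
    c ∈ tupleCentralizer r ↔ ∀ j, Commute c (r j) := by
  rw [tupleCentralizer, Subgroup.mem_centralizer_iff]
  constructor
  · intro h j
    exact ((h (r j) (Subgroup.subset_closure ⟨j, rfl⟩))).symm
  · intro h x hx
    refine Subgroup.closure_induction (fun y hy => ?_) (by simp) ?_ ?_ hx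
    · obtain ⟨j, rfl⟩ := hy
      exact (h j).symm
    · intro a b _ _ ha hb
      rw [mul_assoc, hb, ← mul_assoc, ha, mul_assoc]
    · intro a _ ha
      exact Commute.inv_left ha
  
lemma tupleConj_equiv {G : Type*} [Group G] {k : ℕ} (s : Set (Fin k → G)) :
    Equivalence (tupleConj s) := by
  constructor
  · intro a; exact ⟨1, by simp⟩
  · rintro a b ⟨g, hg⟩
    exact ⟨g⁻¹, fun i => by rw [← hg i]; group⟩
  · rintro a b c ⟨g, hg⟩ ⟨g', hg'⟩
    refine ⟨g' * g, fun i => ?_⟩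
    rw [← hg' i, ← hg i]; group

lemma append_mem_pTuples {G : Type*} [Group G] {p m n : ℕ} {r : Fin n → G}
    (hr : r ∈ pTuples G p n) (x : Fin m → tupleCentralizer r)
    (hx : x ∈ pTuples (tupleCentralizer r) p m) :
    Fin.append (fun i => (x i : G)) r ∈ pTuples G p (m + n) := by
  constructor
  · intro i j
    refine Fin.addCases (fun i' => ?_) (fun i' => ?_) i <;>
      refine Fin.addCases (fun j' => ?_) (fun j' => ?_) j <;>
      simp only [Fin.append_left, Fin.append_right]
    · exact (hx.1 i' j').map (tupleCentralizer r).subtype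
    · exact mem_tupleCentralizer_iff.mp (x i').2 j'
    · exact (mem_tupleCentralizer_iff.mp (x j').2 i').symm
    · exact hr.1 i' j'
  · intro i
    refine Fin.addCases (fun i' => ?_) (fun i' => ?_) i <;>
      simp only [Fin.append_left, Fin.append_right]
    · obtain ⟨k, hk⟩ := hx.2 i'
      exact ⟨k, by rw [Subgroup.orderOf_coe, hk]⟩
    · exact hr.2 i'


/-- Given a set `R` of representatives for the orbits of `G` on `G_{n,p}`, the map sending
(the class of) an `m`-tuple `x` in `C⟨g₁,…,gₙ⟩_{m,p}` (for `(g₁,…,gₙ) ∈ R`) to the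
`G`-conjugacy class of `(x₁,…,xₘ,g₁,…,gₙ)` is well defined and bijective onto
`G \ G_{m+n,p}`. -/
theorem orbit_decomposition_of_tuples {G : Type*} [Group G] (p m n : ℕ) (hp : p.Prime)
    (hm : 1 ≤ m) (hn : 1 ≤ n) (R : Set (Fin n → G)) (hR₁ : R ⊆ pTuples G p n)
    (hR₂ : ∀ v ∈ pTuples G p n, ∃! r, r ∈ R ∧ ∃ g : G, ∀ i, g * r i * g⁻¹ = v i) :
    (∀ (r : Fin n → G), r ∈ R → ∀ x : Fin m → tupleCentralizer r,
        x ∈ pTuples (tupleCentralizer r) p m →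
        Fin.append (fun i => (x i : G)) r ∈ pTuples G p (m + n)) ∧
    ∃ f : ((r : R) × Quot (tupleConj (pTuples (tupleCentralizer r.1) p m))) →
        Quot (tupleConj (pTuples G p (m + n))),
      Function.Bijective f ∧
      ∀ (r : R) (x : pTuples (tupleCentralizer r.1) p m)
        (h : Fin.append (fun i => (x.1 i : G)) r.1 ∈ pTuples G p (m + n)),
        f ⟨r, Quot.mk _ x⟩ = Quot.mk _ ⟨Fin.append (fun i => (x.1 i : G)) r.1, h⟩ := by
  refine ⟨fun r hr x hx => append_mem_pTuples (hR₁ hr) x hx, ?_⟩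
  have sound : ∀ (r : R) (a b : pTuples (tupleCentralizer r.1) p m),
      tupleConj (pTuples (tupleCentralizer r.1) p m) a b →
      (Quot.mk (tupleConj (pTuples G p (m + n)))
          ⟨Fin.append (fun i => (a.1 i : G)) r.1, append_mem_pTuples (hR₁ r.2) a.1 a.2⟩)
        = Quot.mk _ ⟨Fin.append (fun i => (b.1 i : G)) r.1,
            append_mem_pTuples (hR₁ r.2) b.1 b.2⟩ := by
    rintro r a b ⟨c, hc⟩
    apply Quot.sound
    refine ⟨(c : G), fun i => ?_⟩
    refine Fin.addCases (fun i' => ?_) (fun i' => ?_) i <;>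
      simp only [Fin.append_left, Fin.append_right]
    · have := congrArg Subtype.val (hc i')
      push_cast at this
      exact this
    · have h := (mem_tupleCentralizer_iff.mp c.2 i').eq
      rw [h, mul_assoc]
      simp
  refine ⟨fun q => Quot.lift
      (fun a => Quot.mk _ ⟨Fin.append (fun i => (a.1 i : G)) q.1.1,
        append_mem_pTuples (hR₁ q.1.2) a.1 a.2⟩) (sound q.1) q.2, ⟨?_, ?_⟩, ?_⟩
  · -- injective
    rintro ⟨r, q⟩ ⟨r', q'⟩ h
    induction q using Quot.ind with | _ x =>
    induction q' using Quot.ind with | _ x' =>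
    simp only at h
    have hrel := (Equivalence.eqvGen_iff (tupleConj_equiv _)).mp (Quot.eqvGen_exact h)
    obtain ⟨g, hg⟩ := hrel
    obtain ⟨r₀, -, huniq⟩ := hR₂ r'.1 (hR₁ r'.2)
    have h1 : r.1 = r₀ := huniq r.1 ⟨r.2, g, fun j => by
      have := hg (Fin.natAdd m j)
      simpa [Fin.append_right] using this⟩
    have h2 : r'.1 = r₀ := huniq r'.1 ⟨r'.2, 1, by simp⟩
    have hrr : r = r' := Subtype.ext (h1.trans h2.symm)
    subst hrr
    have hgc : g ∈ tupleCentralizer r.1 := by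
      refine mem_tupleCentralizer_iff.mpr (fun j => ?_)
      have := hg (Fin.natAdd m j)
      simp only [Fin.append_right] at this
      exact mul_inv_eq_iff_eq_mul.mp this
    have hx : tupleConj (pTuples (tupleCentralizer r.1) p m) x x' := by
      refine ⟨⟨g, hgc⟩, fun i => Subtype.ext ?_⟩
      push_cast
      have := hg (Fin.castAdd n i)
      simpa [Fin.append_left] using this
    exact Sigma.ext rfl (heq_of_eq (Quot.sound hx))
  · -- surjective
    intro q
    induction q using Quot.ind with | _ w =>
    have hvmem : (fun j => w.1 (Fin.natAdd m j)) ∈ pTuples G p n :=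
      ⟨fun i j => w.2.1 _ _, fun i => w.2.2 _⟩
    obtain ⟨r₀, ⟨hr₀R, g, hg⟩, -⟩ := hR₂ _ hvmem
    have hconj : ∀ i : Fin m, g⁻¹ * w.1 (Fin.castAdd n i) * g ∈ tupleCentralizer r₀ := by
      intro i
      refine mem_tupleCentralizer_iff.mpr (fun j => ?_)
      have hr : r₀ j = g⁻¹ * w.1 (Fin.natAdd m j) * g := by
        rw [← hg j]; group
      rw [hr]
      have hcomm : Commute (w.1 (Fin.castAdd n i)) (w.1 (Fin.natAdd m j)) := w.2.1 _ _
      simpa using hcomm.map (MulAut.conj g⁻¹).toMonoidHom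
    have hxmem : (fun i => (⟨_, hconj i⟩ : tupleCentralizer r₀)) ∈
        pTuples (tupleCentralizer r₀) p m := by
      constructor
      · intro i j
        refine Subtype.ext ?_
        push_cast
        have hcomm : Commute (w.1 (Fin.castAdd n i)) (w.1 (Fin.castAdd n j)) := w.2.1 _ _
        simpa using (hcomm.map (MulAut.conj g⁻¹).toMonoidHom).eq
      · intro i
        obtain ⟨k, hk⟩ := w.2.2 (Fin.castAdd n i)
        refine ⟨k, ?_⟩
        rw [← Subgroup.orderOf_coe]
        show orderOf (g⁻¹ * w.1 (Fin.castAdd n i) * g) = p ^ k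
        have : g⁻¹ * w.1 (Fin.castAdd n i) * g = (MulAut.conj g⁻¹) (w.1 (Fin.castAdd n i)) := by
          simp [MulAut.conj_apply]
        rw [this, MulEquiv.orderOf_eq, hk]
    refine ⟨⟨⟨r₀, hr₀R⟩, Quot.mk _ ⟨_, hxmem⟩⟩, ?_⟩
    apply Quot.sound
    refine ⟨g, fun i => ?_⟩
    refine Fin.addCases (fun i' => ?_) (fun i' => ?_) i <;>
      simp only [Fin.append_left, Fin.append_right]
    · group
    · exact hg i'
  · intro r x h
    rfl
end

section
/- Let G be a group, H a subgroup of G, and K a finite subgroup of G. Consider the left translation action of the centralizer C_G(H) on the set (G/K)^H of left cosets gK that are fixed by H (i.e. HgK = gK elementwise, equivalently g⁻¹Hg ≤ K). Then this action has only finitely many orbits; indeed, the map sending the C_G(H)-orbit of gK to the K-conjugacy class of the injective homomorphism H → K given by h ↦ g⁻¹hg is well defined and injective, and its target is finite. -/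
/-- The set `(G/K)^H` of left cosets fixed by every element of `H`. -/
def fixedCosets {G : Type*} [Group G] (H K : Subgroup G) : Set (G ⧸ K) :=
  {x | ∀ h : H, (h : G) • x = x}

/-- Translation relation on `(G/K)^H` by the centralizer of `H`. -/
def centralizerOrbitRel {G : Type*} [Group G] (H K : Subgroup G)
    (a b : fixedCosets H K) : Prop :=
  ∃ c ∈ Subgroup.centralizer (H : Set G), c • a.1 = b.1

/-- `K`-conjugacy relation on injective homomorphisms `H →* K`. -/
def conjHomRel {G : Type*} [Group G] (H K : Subgroup G)
    (φ ψ : {φ : H →* K // Function.Injective φ}) : Prop :=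
  ∃ k : K, ∀ h : H, ψ.1 h = k * φ.1 h * k⁻¹

section Aux
variable {G : Type*} [Group G] (H K : Subgroup G)

lemma fc_iff (g : G) :
    (QuotientGroup.mk g : G ⧸ K) ∈ fixedCosets H K ↔ ∀ h ∈ H, g⁻¹ * h * g ∈ K := by
  constructor
  · intro hx h hh
    have := hx ⟨h, hh⟩
    rw [MulAction.Quotient.smul_mk, QuotientGroup.eq] at this
    simpa [mul_assoc] using K.inv_mem this
  · intro hx h
    rw [MulAction.Quotient.smul_mk, QuotientGroup.eq]
    have := hx (h : G)⁻¹ (H.inv_mem h.2)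
    simpa [mul_assoc] using this

variable {H K}

def conjHom (g : G) (hg : ∀ h ∈ H, g⁻¹ * h * g ∈ K) : H →* K where
  toFun h := ⟨g⁻¹ * h * g, hg h h.2⟩
  map_one' := by ext; simp
  map_mul' a b := by ext; simp; group

lemma conjHom_inj (g : G) (hg : ∀ h ∈ H, g⁻¹ * h * g ∈ K) :
    Function.Injective (conjHom g hg) := by
  intro a b hab
  have : g⁻¹ * a * g = g⁻¹ * b * g := congrArg Subtype.val hab
  ext
  exact mul_left_cancel (mul_right_cancel this)

lemma inj_of_conj (g : G) (φ : H →* K) (hφ : ∀ h : H, (φ h : G) = g⁻¹ * h * g) :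
    Function.Injective φ := by
  intro a b hab
  have : g⁻¹ * a * g = g⁻¹ * b * g := by
    rw [← hφ a, ← hφ b, hab]
  ext
  exact mul_left_cancel (mul_right_cancel this)

lemma conjHomRel_equiv : Equivalence (conjHomRel H K) := by
  constructor
  · intro φ; exact ⟨1, by simp⟩
  · rintro φ ψ ⟨k, hk⟩
    exact ⟨k⁻¹, fun h => by rw [hk h]; group⟩
  · rintro φ ψ χ ⟨k, hk⟩ ⟨l, hl⟩
    exact ⟨l * k, fun h => by rw [hl h, hk h]; group⟩

end Aux
section Main
variable {G : Type*} [Group G] {H K : Subgroup G}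

lemma fc_out (x : fixedCosets H K) : ∀ h ∈ H, (x.1.out)⁻¹ * h * x.1.out ∈ K := by
  have : (QuotientGroup.mk x.1.out : G ⧸ K) ∈ fixedCosets H K := by
    rw [QuotientGroup.out_eq']; exact x.2
  exact (fc_iff H K _).mp this

noncomputable def repHom (x : fixedCosets H K) : {φ : H →* K // Function.Injective φ} :=
  ⟨conjHom x.1.out (fc_out x), conjHom_inj _ _⟩

lemma key (g : G) (hg : (QuotientGroup.mk g : G ⧸ K) ∈ fixedCosets H K)
    (φ : H →* K) (hφ : ∀ h : H, (φ h : G) = g⁻¹ * h * g) (hinj : Function.Injective φ) :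
    Quot.mk (conjHomRel H K) (repHom ⟨QuotientGroup.mk g, hg⟩)
      = Quot.mk (conjHomRel H K) ⟨φ, hinj⟩ := by
  apply Quot.sound
  set g' := (QuotientGroup.mk g : G ⧸ K).out with hg'
  have hmem : g⁻¹ * g' ∈ K := by
    rw [← QuotientGroup.eq, QuotientGroup.out_eq']
  refine ⟨⟨g⁻¹ * g', hmem⟩, fun h => ?_⟩
  ext
  show (φ h : G) = (g⁻¹ * g') * (g'⁻¹ * h * g') * (g⁻¹ * g')⁻¹
  rw [hφ h]
  group

lemma wd : ∀ a b : fixedCosets H K, centralizerOrbitRel H K a b →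
    Quot.mk (conjHomRel H K) (repHom a) = Quot.mk (conjHomRel H K) (repHom b) := by
  rintro a b ⟨c, hc, hab⟩
  obtain ⟨ga, hga⟩ : ∃ g : G, QuotientGroup.mk g = a.1 := ⟨a.1.out, QuotientGroup.out_eq' _⟩
  have hga' : (QuotientGroup.mk ga : G ⧸ K) ∈ fixedCosets H K := hga ▸ a.2
  have hgb : (QuotientGroup.mk (c * ga) : G ⧸ K) = b.1 := by
    rw [← hab, ← hga, MulAction.Quotient.smul_mk]; rfl
  have hgb' : (QuotientGroup.mk (c * ga) : G ⧸ K) ∈ fixedCosets H K := hgb ▸ b.2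
  have ea : a = ⟨QuotientGroup.mk ga, hga'⟩ := Subtype.ext hga.symm
  have eb : b = ⟨QuotientGroup.mk (c * ga), hgb'⟩ := Subtype.ext hgb.symm
  rw [ea, eb, key ga hga' (conjHom ga ((fc_iff H K ga).mp hga')) (fun h => rfl)
    (conjHom_inj _ _),
    key (c * ga) hgb' (conjHom ga ((fc_iff H K ga).mp hga')) (fun h => ?_)
    (conjHom_inj _ _)]
  show (ga⁻¹ * h * ga : G) = (c * ga)⁻¹ * h * (c * ga)
  have : c * h = h * c := (Subgroup.mem_centralizer_iff.mp hc h h.2).symm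
  rw [mul_inv_rev]
  calc ga⁻¹ * h * ga = ga⁻¹ * c⁻¹ * (c * h) * ga := by group
  _ = ga⁻¹ * c⁻¹ * (h * c) * ga := by rw [this]
  _ = ga⁻¹ * c⁻¹ * h * (c * ga) := by group

end Main
section Fin
variable {G : Type*} [Group G] {H K : Subgroup G}

lemma fin_inj (hK : Finite K) : Finite {φ : H →* K // Function.Injective φ} := by
  by_cases hne : Nonempty {φ : H →* K // Function.Injective φ}
  · obtain ⟨φ0, h0⟩ := hne
    have : Finite H := Finite.of_injective _ h0
    have : Finite (H →* K) :=
      Finite.of_injective (fun f => (f : H → K)) DFunLike.coe_injective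
    exact Subtype.finite
  · have := not_nonempty_iff.mp hne
    infer_instance

theorem main' (H K : Subgroup G) (hK : Finite K) :
    (∀ x : G ⧸ K, x ∈ fixedCosets H K ↔ ∃ g : G, x = QuotientGroup.mk g ∧
        ∀ h ∈ H, g⁻¹ * h * g ∈ K) ∧
    (∀ g : G, QuotientGroup.mk g ∈ fixedCosets H K →
      ∃ φ : H →* K, (∀ h : H, (φ h : G) = g⁻¹ * h * g) ∧ Function.Injective φ) ∧
    Finite (Quot (conjHomRel H K)) ∧
    (∃ f : Quot (centralizerOrbitRel H K) → Quot (conjHomRel H K),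
      Function.Injective f ∧
      ∀ (g : G) (hg : QuotientGroup.mk g ∈ fixedCosets H K)
        (φ : H →* K) (hφ : ∀ h : H, (φ h : G) = g⁻¹ * h * g)
        (hinj : Function.Injective φ),
        f (Quot.mk _ ⟨QuotientGroup.mk g, hg⟩) = Quot.mk _ ⟨φ, hinj⟩) ∧
    Finite (Quot (centralizerOrbitRel H K)) := by
  have hfin : Finite {φ : H →* K // Function.Injective φ} := fin_inj hK
  have hfinQ : Finite (Quot (conjHomRel H K)) :=
    Finite.of_surjective (Quot.mk _) Quot.mk_surjective
  set f : Quot (centralizerOrbitRel H K) → Quot (conjHomRel H K) :=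
    Quot.lift (fun x => Quot.mk _ (repHom x)) wd with hf
  have hspec : ∀ (g : G) (hg : QuotientGroup.mk g ∈ fixedCosets H K)
      (φ : H →* K) (hφ : ∀ h : H, (φ h : G) = g⁻¹ * h * g)
      (hinj : Function.Injective φ),
      f (Quot.mk _ ⟨QuotientGroup.mk g, hg⟩) = Quot.mk _ ⟨φ, hinj⟩ :=
    fun g hg φ hφ hinj => key g hg φ hφ hinj
  have hinjf : Function.Injective f := by
    intro x y
    induction x using Quot.ind with | _ a =>
    induction y using Quot.ind with | _ b =>
    intro hxy
    simp only [hf] at hxy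
    have hrel : conjHomRel H K (repHom a) (repHom b) :=
      (Equivalence.eqvGen_iff conjHomRel_equiv).mp (Quot.eqvGen_exact hxy)
    obtain ⟨k, hk⟩ := hrel
    set ga := a.1.out with hga
    set gb := b.1.out with hgb
    set kk : G := (k : G) with hkk
    apply Quot.sound
    refine ⟨gb * kk * ga⁻¹, ?_, ?_⟩
    · rw [Subgroup.mem_centralizer_iff]
      intro h hh
      have h1 : (gb⁻¹ * h * gb : G) = kk * (ga⁻¹ * h * ga) * kk⁻¹ := by
        have := congrArg Subtype.val (hk ⟨h, hh⟩)
        simpa [repHom, conjHom, mul_assoc] using this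
      have key2 : (gb * kk * ga⁻¹) * h * (gb * kk * ga⁻¹)⁻¹ = h := by
        calc (gb * kk * ga⁻¹) * h * (gb * kk * ga⁻¹)⁻¹
            = gb * (kk * (ga⁻¹ * h * ga) * kk⁻¹) * gb⁻¹ := by group
          _ = gb * (gb⁻¹ * h * gb) * gb⁻¹ := by rw [← h1]
          _ = h := by group
      calc h * (gb * kk * ga⁻¹)
          = ((gb * kk * ga⁻¹) * h * (gb * kk * ga⁻¹)⁻¹) * (gb * kk * ga⁻¹) := by rw [key2]
        _ = (gb * kk * ga⁻¹) * h := by group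
    · show (gb * kk * ga⁻¹ : G) • a.1 = b.1
      conv_lhs => rw [← QuotientGroup.out_eq' a.1]
      rw [MulAction.Quotient.smul_mk, ← QuotientGroup.out_eq' b.1, QuotientGroup.eq]
      have : (gb * kk * ga⁻¹ * ga)⁻¹ * gb = kk⁻¹ := by group
      rw [smul_eq_mul, ← hga, ← hgb, this]
      exact K.inv_mem k.2
  refine ⟨fun x => ?_, fun g hg => ?_, hfinQ, ⟨f, hinjf, hspec⟩,
    Finite.of_injective f hinjf⟩
  · constructor
    · intro hx
      obtain ⟨g, hg⟩ : ∃ g : G, QuotientGroup.mk g = x := ⟨x.out, QuotientGroup.out_eq' _⟩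
      exact ⟨g, hg.symm, (fc_iff H K g).mp (hg ▸ hx)⟩
    · rintro ⟨g, rfl, hg⟩
      exact (fc_iff H K g).mpr hg
  · exact ⟨conjHom g ((fc_iff H K g).mp hg), fun h => rfl, conjHom_inj _ _⟩

end Fin


/-- Let `H` be a subgroup and `K` a finite subgroup of `G`. The left translation action of
the centralizer `C_G(H)` on the `H`-fixed cosets `(G/K)^H` has finitely many orbits:
every `H`-fixed coset `gK` yields an injective homomorphism `H → K`, `h ↦ g⁻¹hg`; the map
sending the `C_G(H)`-orbit of `gK` to the `K`-conjugacy class of this homomorphism is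
well defined and injective, and its target is finite. -/
theorem finitely_many_centralizer_orbits_on_fixed_cosets {G : Type*} [Group G]
    (H K : Subgroup G) (hK : Finite K) :
    (∀ x : G ⧸ K, x ∈ fixedCosets H K ↔ ∃ g : G, x = QuotientGroup.mk g ∧
        ∀ h ∈ H, g⁻¹ * h * g ∈ K) ∧
    (∀ g : G, QuotientGroup.mk g ∈ fixedCosets H K →
      ∃ φ : H →* K, (∀ h : H, (φ h : G) = g⁻¹ * h * g) ∧ Function.Injective φ) ∧
    Finite (Quot (conjHomRel H K)) ∧
    (∃ f : Quot (centralizerOrbitRel H K) → Quot (conjHomRel H K),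
      Function.Injective f ∧
      ∀ (g : G) (hg : QuotientGroup.mk g ∈ fixedCosets H K)
        (φ : H →* K) (hφ : ∀ h : H, (φ h : G) = g⁻¹ * h * g)
        (hinj : Function.Injective φ),
        f (Quot.mk _ ⟨QuotientGroup.mk g, hg⟩) = Quot.mk _ ⟨φ, hinj⟩) ∧
    Finite (Quot (centralizerOrbitRel H K)) := by
  exact main' H K hK
end

section
/- Every element of order 3 in SL_3(ℤ) has finite centralizer; that is, for every matrix g in the special linear group of 3×3 integer matrices with g of order 3, the centralizer subgroup {x ∈ SL_3(ℤ) : xg = gx} is finite. -/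
open Matrix

namespace SL3CentAux

noncomputable abbrev phi : Matrix (Fin 3) (Fin 3) ℤ →+* Matrix (Fin 3) (Fin 3) ℚ :=
  (Int.castRingHom ℚ).mapMatrix

lemma phi_apply (A : Matrix (Fin 3) (Fin 3) ℤ) (i j : Fin 3) : phi A i j = (A i j : ℚ) := rfl

lemma phi_inj : Function.Injective phi := by
  intro A B h
  ext i j
  have : (phi A) i j = (phi B) i j := by rw [h]
  rw [phi_apply, phi_apply] at this
  exact_mod_cast this

def castVec (w : Fin 3 → ℤ) : Fin 3 → ℚ := fun i => (w i : ℚ)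

lemma phi_mulVec (A : Matrix (Fin 3) (Fin 3) ℤ) (w : Fin 3 → ℤ) :
    phi A *ᵥ castVec w = castVec (A *ᵥ w) := by
  funext i
  simp only [castVec, Matrix.mulVec, dotProduct, phi_apply, Fin.sum_univ_three]
  push_cast
  ring

lemma int_mul (q : ℚ) (c : ℤ) (h : (q.den : ℤ) ∣ c) : ∃ m : ℤ, (c:ℚ) * q = m := by
  obtain ⟨k, hk⟩ := h
  refine ⟨k * q.num, ?_⟩
  push_cast [hk]
  rw [mul_comm (q.den : ℚ) k, mul_assoc, Rat.den_mul_eq_num]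

lemma clear_den_vec (v : Fin 3 → ℚ) :
    ∃ (c : ℤ) (w : Fin 3 → ℤ), 0 < c ∧ castVec w = (c:ℚ) • v := by
  have h : ∀ i : Fin 3, ∃ m : ℤ, ((∏ j : Fin 3, ((v j).den : ℤ) : ℤ) : ℚ) * v i = m :=
    fun i => int_mul _ _ (Finset.dvd_prod_of_mem (f := fun j => ((v j).den : ℤ))
      (Finset.mem_univ i))
  choose w hw using h
  refine ⟨∏ j : Fin 3, ((v j).den : ℤ), ⟨w, ?_, ?_⟩⟩
  · exact Finset.prod_pos fun j _ => Int.natCast_pos.mpr (v j).pos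
  · funext i
    simp only [castVec, Pi.smul_apply, smul_eq_mul]
    rw [← hw i]

lemma smul_one_numeral : ((2:ℚ) • (1 : Matrix (Fin 3) (Fin 3) ℚ)) = 2 := by
  norm_num [Matrix.smul_one_eq_diagonal]
  try rfl

end SL3CentAux
set_option maxHeartbeats 2000000 in
/-- Every element of order 3 in `SL₃(ℤ)` has finite centralizer. -/
theorem centralizer_finite_of_orderOf_eq_three
    (g : Matrix.SpecialLinearGroup (Fin 3) ℤ) (hg : orderOf g = 3) :
    Finite (Subgroup.centralizer ({g} : Set (Matrix.SpecialLinearGroup (Fin 3) ℤ))) := by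
  classical
  set C := Subgroup.centralizer ({g} : Set (Matrix.SpecialLinearGroup (Fin 3) ℤ)) with hC
  set Az : Matrix (Fin 3) (Fin 3) ℤ := ↑g with hAz
  set G : Matrix (Fin 3) (Fin 3) ℚ := SL3CentAux.phi Az with hGdef
  -- basic facts
  have hg1 : g ≠ 1 := by
    intro h
    rw [h, orderOf_one] at hg
    norm_num at hg
  have hAz3 : Az ^ 3 = 1 := by
    have h := pow_orderOf_eq_one g
    rw [hg] at h
    calc Az ^ 3 = ((g ^ 3 : Matrix.SpecialLinearGroup (Fin 3) ℤ) :
        Matrix (Fin 3) (Fin 3) ℤ) := rfl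
    _ = 1 := by rw [h]; rfl
  have hG3 : G ^ 3 = 1 := by
    rw [hGdef, ← _root_.map_pow, hAz3, _root_.map_one]
  have hdetG : G.det = 1 := by
    rw [hGdef]
    have h := ((Int.castRingHom ℚ).map_det Az).symm
    rw [show ((Int.castRingHom ℚ).mapMatrix Az) = SL3CentAux.phi Az from rfl] at h
    rw [h, g.prop]
    norm_num
  have hGne1 : G ≠ 1 := by
    intro h
    rw [hGdef, ← _root_.map_one SL3CentAux.phi] at h
    have := SL3CentAux.phi_inj h
    exact hg1 (Subtype.ext this)
  set E : Matrix (Fin 3) (Fin 3) ℚ := G ^ 2 + G + 1 with hEdef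
  set Hz : Matrix (Fin 3) (Fin 3) ℤ := 1 + 1 - Az - Az ^ 2 with hHzdef
  set H : Matrix (Fin 3) (Fin 3) ℚ := 1 + 1 - G - G ^ 2 with hHdef
  have hphiH : SL3CentAux.phi Hz = H := by
    rw [hHzdef, hHdef, map_sub, map_sub, map_add, _root_.map_one, _root_.map_pow, hGdef]
  have hEG : E * G = E := by
    have h1 : E * G = G ^ 3 + G ^ 2 + G := by rw [hEdef]; noncomm_ring
    rw [h1, hG3, hEdef]
    noncomm_ring
  have hEG2 : E * G ^ 2 = E := by
    rw [pow_two, ← mul_assoc, hEG, hEG]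
  have hEH : E * H = 0 := by
    rw [hHdef, mul_sub, mul_sub, mul_add, mul_one, hEG, hEG2]
    abel
  have hEne : E ≠ 0 := by
    intro hE
    have hsq : G ^ 2 = -G - 1 := by
      have h : G ^ 2 - (-G - 1) = E := by rw [hEdef]; noncomm_ring
      have := hE ▸ h
      exact sub_eq_zero.mp this
    have h2G : (2 : Matrix (Fin 3) (Fin 3) ℚ) * G = G + G := by
      have : (2 : Matrix (Fin 3) (Fin 3) ℚ) = 1 + 1 := by norm_num
      rw [this, add_mul, one_mul]
    have hs2 : (G - 1) ^ 2 = (-3 : ℚ) • G := by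
      have e1 : (G - 1) ^ 2 = G ^ 2 - 2 * G + 1 := by noncomm_ring
      rw [e1, hsq, h2G]
      ext i j
      simp only [Matrix.sub_apply, Matrix.add_apply, Matrix.neg_apply, Matrix.smul_apply,
        smul_eq_mul]
      ring
    have hdet2 : ((G - 1).det) ^ 2 = -27 := by
      have h : ((G - 1) ^ 2).det = ((-3 : ℚ) • G).det := by rw [hs2]
      rw [Matrix.det_pow, Matrix.det_smul, hdetG] at h
      rw [h]
      norm_num
    nlinarith [sq_nonneg ((G - 1).det)]
  have hfac : (G - 1) * E = 0 := by
    have h : (G - 1) * E = G ^ 3 - 1 := by rw [hEdef]; noncomm_ring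
    rw [h, hG3, sub_self]
  have hdetG1 : (G - 1).det = 0 := by
    by_contra hne
    have hu := Matrix.nonsing_inv_mul (G - 1) (isUnit_iff_ne_zero.mpr hne)
    have : E = 0 := by
      calc E = ((G - 1)⁻¹ * (G - 1)) * E := by rw [hu, one_mul]
      _ = (G - 1)⁻¹ * ((G - 1) * E) := by rw [mul_assoc]
      _ = 0 := by rw [hfac, mul_zero]
    exact hEne this
  -- the fixed vector v₁ (integral)
  obtain ⟨z₁, hz₁ne, hGz₁⟩ :
      ∃ z₁ : Fin 3 → ℤ, SL3CentAux.castVec z₁ ≠ 0 ∧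
        G *ᵥ SL3CentAux.castVec z₁ = SL3CentAux.castVec z₁ := by
    obtain ⟨v, hv0, hv⟩ := (Matrix.exists_mulVec_eq_zero_iff).mpr hdetG1
    have hGv : G *ᵥ v = v := by
      rw [Matrix.sub_mulVec, Matrix.one_mulVec, sub_eq_zero] at hv
      exact hv
    obtain ⟨c, w, hc, hw⟩ := SL3CentAux.clear_den_vec v
    refine ⟨w, ?_, ?_⟩
    · rw [hw]
      exact smul_ne_zero (by exact_mod_cast hc.ne') hv0
    · rw [hw, Matrix.mulVec_smul, hGv]
  set v₁ : Fin 3 → ℚ := SL3CentAux.castVec z₁ with hv₁def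
  have hG2v₁ : G ^ 2 *ᵥ v₁ = v₁ := by
    rw [pow_two, ← Matrix.mulVec_mulVec, hGz₁, hGz₁]
  have hEv₁ : E *ᵥ v₁ = (3:ℚ) • v₁ := by
    rw [hEdef, Matrix.add_mulVec, Matrix.add_mulVec, Matrix.one_mulVec, hG2v₁, hGz₁]
    module
  -- the vector v₂ (integral)
  have hHne : H ≠ 0 := by
    intro h
    rw [hHdef] at h
    have hsq : G ^ 2 = 1 + 1 - G := (sub_eq_zero.mp h).symm
    have heq : (1 : Matrix (Fin 3) (Fin 3) ℚ) = G + G - (1 + 1 - G) := by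
      calc (1 : Matrix (Fin 3) (Fin 3) ℚ) = G ^ 3 := hG3.symm
      _ = G ^ 2 * G := pow_succ G 2
      _ = (1 + 1 - G) * G := by rw [hsq]
      _ = G + G - G ^ 2 := by noncomm_ring
      _ = G + G - (1 + 1 - G) := by rw [hsq]
    have hkey : (3:ℚ) • (G - 1) = (G + G - (1 + 1 - G)) - 1 := by module
    rw [← heq, sub_self] at hkey
    have : G - 1 = 0 := by
      have h3 : (3:ℚ) ≠ 0 := by norm_num
      exact (smul_eq_zero.mp hkey).resolve_left h3
    exact hGne1 (by rwa [sub_eq_zero] at this)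
  obtain ⟨z₂, hz₂ne, hEz₂⟩ :
      ∃ z₂ : Fin 3 → ℤ, SL3CentAux.castVec z₂ ≠ 0 ∧
        E *ᵥ SL3CentAux.castVec z₂ = 0 := by
    obtain ⟨i', j', hij⟩ : ∃ i j, H i j ≠ 0 := by
      by_contra hcon
      push_neg at hcon
      exact hHne (by ext i j; rw [Matrix.zero_apply]; exact hcon i j)
    have hcol : SL3CentAux.castVec (fun i => Hz i j') = H *ᵥ Pi.single j' 1 := by
      funext i
      rw [← hphiH]
      simp [SL3CentAux.castVec, SL3CentAux.phi_apply, Matrix.mulVec, dotProduct,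
        Pi.single_apply]
    refine ⟨fun i => Hz i j', ?_, ?_⟩
    · intro h0
      apply hij
      have := congrFun h0 i'
      rw [← hphiH]
      simpa [SL3CentAux.castVec] using this
    · rw [hcol, Matrix.mulVec_mulVec, hEH, Matrix.zero_mulVec]
  set v₂ : Fin 3 → ℚ := SL3CentAux.castVec z₂ with hv₂def
  have hEGv₂ : E *ᵥ (G *ᵥ v₂) = 0 := by
    rw [Matrix.mulVec_mulVec, hEG]
    exact hEz₂
  have hG2v₂ : G ^ 2 *ᵥ v₂ = -v₂ - G *ᵥ v₂ := by
    have h := hEz₂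
    rw [hEdef, Matrix.add_mulVec, Matrix.add_mulVec, Matrix.one_mulVec] at h
    funext i
    have := congrFun h i
    simp only [Pi.add_apply, Pi.zero_apply, Pi.sub_apply, Pi.neg_apply] at this ⊢
    linarith
  have hG3v₂ : G ^ 2 *ᵥ (G *ᵥ v₂) = v₂ := by
    rw [Matrix.mulVec_mulVec]
    have hp : G ^ 2 * G = G ^ 3 := (pow_succ G 2).symm
    rw [hp, hG3, Matrix.one_mulVec]
  -- independence of v₂, G v₂
  have hindep : ∀ c d : ℚ, c • v₂ + d • (G *ᵥ v₂) = 0 → c = 0 ∧ d = 0 := by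
    intro c d h
    have hM : (c • (1 : Matrix (Fin 3) (Fin 3) ℚ) + d • G ^ 2) *ᵥ (c • v₂ + d • (G *ᵥ v₂))
        = (c ^ 2 - c * d + d ^ 2) • v₂ := by
      simp only [Matrix.add_mulVec, Matrix.mulVec_add, Matrix.mulVec_smul,
        Matrix.smul_mulVec, Matrix.one_mulVec, hG2v₂, hG3v₂]
      module
    have h0 : (c ^ 2 - c * d + d ^ 2) • v₂ = 0 := by
      rw [← hM, h, Matrix.mulVec_zero]
    have hq : c ^ 2 - c * d + d ^ 2 = 0 := by
      rcases smul_eq_zero.mp h0 with h' | h'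
      · exact h'
      · exact absurd h' hz₂ne
    constructor
    · have hc2 : c ^ 2 = 0 := le_antisymm (by nlinarith [sq_nonneg (c - d), sq_nonneg d]) (sq_nonneg c)
      exact pow_eq_zero_iff (two_ne_zero) |>.mp hc2
    · have hd2 : d ^ 2 = 0 := le_antisymm (by nlinarith [sq_nonneg (c - d), sq_nonneg c]) (sq_nonneg d)
      exact pow_eq_zero_iff (two_ne_zero) |>.mp hd2
  -- the basis matrix P
  set P : Matrix (Fin 3) (Fin 3) ℚ :=
    Matrix.of (fun i j => ![v₁, v₂, G *ᵥ v₂] j i) with hPdef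
  have hPvec : ∀ w : Fin 3 → ℚ,
      P *ᵥ w = w 0 • v₁ + w 1 • v₂ + w 2 • (G *ᵥ v₂) := by
    intro w
    funext i
    simp only [hPdef, Matrix.mulVec, dotProduct, Fin.sum_univ_three, Matrix.of_apply,
      Matrix.cons_val_zero, Matrix.cons_val_one, Matrix.head_cons, Pi.add_apply,
      Pi.smul_apply, smul_eq_mul, Matrix.cons_val_two, Matrix.tail_cons]
    ring
  have hPdet : P.det ≠ 0 := by
    intro h0
    obtain ⟨w, hw0, hw⟩ := Matrix.exists_mulVec_eq_zero_iff.mpr h0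
    rw [hPvec w] at hw
    have hexp : E *ᵥ (w 0 • v₁ + w 1 • v₂ + w 2 • (G *ᵥ v₂)) = (3 * w 0) • v₁ := by
      simp only [Matrix.mulVec_add, Matrix.mulVec_smul, hEv₁, hEz₂, hEGv₂, smul_zero, add_zero]
      module
    rw [hw, Matrix.mulVec_zero] at hexp
    have hw00 : w 0 = 0 := by
      rcases smul_eq_zero.mp hexp.symm with h' | h'
      · linarith
      · exact absurd h' hz₁ne
    rw [hw00, zero_smul, zero_add] at hw
    obtain ⟨h1, h2⟩ := hindep _ _ hw
    exact hw0 (funext fun i => by fin_cases i <;> simp [hw00, h1, h2])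
  have hsurj : ∀ z : Fin 3 → ℚ,
      ∃ w : Fin 3 → ℚ, z = w 0 • v₁ + w 1 • v₂ + w 2 • (G *ᵥ v₂) := by
    intro z
    refine ⟨P⁻¹ *ᵥ z, ?_⟩
    rw [← hPvec, Matrix.mulVec_mulVec,
      Matrix.mul_nonsing_inv _ (isUnit_iff_ne_zero.mpr hPdet), Matrix.one_mulVec]
  -- per-element data
  have hcommX : ∀ x : C, (SL3CentAux.phi ↑↑x) * G = G * (SL3CentAux.phi ↑↑x) := by
    intro x
    have hx := Subgroup.mem_centralizer_iff.mp x.prop g (Set.mem_singleton g)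
    have h2 : Az * (↑↑x : Matrix (Fin 3) (Fin 3) ℤ) = (↑↑x) * Az := by
      have := congrArg (fun s : Matrix.SpecialLinearGroup (Fin 3) ℤ =>
        (s : Matrix (Fin 3) (Fin 3) ℤ)) hx
      simpa [hAz] using this
    have h3 := congrArg SL3CentAux.phi h2
    rw [_root_.map_mul, _root_.map_mul] at h3
    rw [hGdef]
    exact h3.symm
  have key : ∀ x : C, ∃ t : ℚ × ℚ × ℚ,
      (SL3CentAux.phi ↑↑x) *ᵥ v₁ = t.1 • v₁ ∧
      (SL3CentAux.phi ↑↑x) *ᵥ v₂ = t.2.1 • v₂ + t.2.2 • (G *ᵥ v₂) := by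
    intro x
    have hXG := hcommX x
    set X := SL3CentAux.phi (↑↑x : Matrix (Fin 3) (Fin 3) ℤ) with hXdef
    have hXG2 : X * G ^ 2 = G ^ 2 * X := by
      rw [pow_two, ← mul_assoc, hXG, mul_assoc, hXG, mul_assoc]
    have hXE : E * X = X * E := by
      rw [hEdef, add_mul, add_mul, one_mul, mul_add, mul_add, mul_one, hXG2, hXG]
    -- first column
    obtain ⟨w, hw⟩ := hsurj (X *ᵥ v₁)
    have hE1 : E *ᵥ (X *ᵥ v₁) = (3:ℚ) • (X *ᵥ v₁) := by
      rw [Matrix.mulVec_mulVec, hXE, ← Matrix.mulVec_mulVec, hEv₁, Matrix.mulVec_smul]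
    have hexp : E *ᵥ (w 0 • v₁ + w 1 • v₂ + w 2 • (G *ᵥ v₂)) = (3 * w 0) • v₁ := by
      simp only [Matrix.mulVec_add, Matrix.mulVec_smul, hEv₁, hEz₂, hEGv₂, smul_zero, add_zero]
      module
    rw [hw, hexp] at hE1
    have h0 : (3 * w 1) • v₂ + (3 * w 2) • (G *ᵥ v₂) = 0 := by
      funext i
      have h1 := congrFun hE1 i
      simp only [Pi.add_apply, Pi.smul_apply, smul_eq_mul, Pi.zero_apply] at h1 ⊢
      linarith
    obtain ⟨ha1, ha2⟩ := hindep _ _ h0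
    have hw1 : w 1 = 0 := by linarith
    have hw2 : w 2 = 0 := by linarith
    have hXv₁ : X *ᵥ v₁ = w 0 • v₁ := by
      rw [hw, hw1, hw2, zero_smul, zero_smul, add_zero, add_zero]
    -- second column
    obtain ⟨u, hu⟩ := hsurj (X *ᵥ v₂)
    have hE2 : E *ᵥ (X *ᵥ v₂) = 0 := by
      rw [Matrix.mulVec_mulVec, hXE, ← Matrix.mulVec_mulVec, hEz₂, Matrix.mulVec_zero]
    have hexp2 : E *ᵥ (u 0 • v₁ + u 1 • v₂ + u 2 • (G *ᵥ v₂)) = (3 * u 0) • v₁ := by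
      simp only [Matrix.mulVec_add, Matrix.mulVec_smul, hEv₁, hEz₂, hEGv₂, smul_zero, add_zero]
      module
    rw [hu, hexp2] at hE2
    have hu0 : u 0 = 0 := by
      rcases smul_eq_zero.mp hE2 with h' | h'
      · linarith
      · exact absurd h' hz₁ne
    have hXv₂ : X *ᵥ v₂ = u 1 • v₂ + u 2 • (G *ᵥ v₂) := by
      rw [hu, hu0, zero_smul, zero_add]
    exact ⟨(w 0, u 1, u 2), hXv₁, hXv₂⟩
  choose F hF1 hF2 using key
  have hF3 : ∀ x : C, (SL3CentAux.phi ↑↑x) *ᵥ (G *ᵥ v₂)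
      = (-(F x).2.2) • v₂ + ((F x).2.1 - (F x).2.2) • (G *ᵥ v₂) := by
    intro x
    have hXG := hcommX x
    have h1 : (SL3CentAux.phi ↑↑x) *ᵥ (G *ᵥ v₂) = G *ᵥ ((SL3CentAux.phi ↑↑x) *ᵥ v₂) := by
      rw [Matrix.mulVec_mulVec, Matrix.mulVec_mulVec, hXG]
    have h2 : G *ᵥ (G *ᵥ v₂) = -v₂ - G *ᵥ v₂ := by
      rw [Matrix.mulVec_mulVec, ← pow_two, hG2v₂]
    rw [h1, hF2 x, Matrix.mulVec_add, Matrix.mulVec_smul, Matrix.mulVec_smul, h2]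
    module
  -- injectivity of F
  have hFinj : Function.Injective F := by
    intro x y hxy
    have e1 : SL3CentAux.phi ↑↑x *ᵥ v₁ = SL3CentAux.phi ↑↑y *ᵥ v₁ := by
      rw [hF1 x, hF1 y, hxy]
    have e2 : SL3CentAux.phi ↑↑x *ᵥ v₂ = SL3CentAux.phi ↑↑y *ᵥ v₂ := by
      rw [hF2 x, hF2 y, hxy]
    have e3 : SL3CentAux.phi ↑↑x *ᵥ (G *ᵥ v₂) = SL3CentAux.phi ↑↑y *ᵥ (G *ᵥ v₂) := by
      rw [hF3 x, hF3 y, hxy]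
    have hXP : SL3CentAux.phi ↑↑x * P = SL3CentAux.phi ↑↑y * P := by
      ext i j
      fin_cases j
      · have h := congrFun e1 i
        simpa [Matrix.mul_apply, Matrix.mulVec, dotProduct, hPdef] using h
      · have h := congrFun e2 i
        simpa [Matrix.mul_apply, Matrix.mulVec, dotProduct, hPdef] using h
      · have h := congrFun e3 i
        simpa [Matrix.mul_apply, Matrix.mulVec, dotProduct, hPdef] using h
    have hXY : SL3CentAux.phi ↑↑x = SL3CentAux.phi ↑↑y := by
      have h := congrArg (fun M => M * P⁻¹) hXP
      simpa [mul_assoc, Matrix.mul_nonsing_inv _ (isUnit_iff_ne_zero.mpr hPdet)] using h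
    have hmm : (↑↑x : Matrix (Fin 3) (Fin 3) ℤ) = ↑↑y := SL3CentAux.phi_inj hXY
    exact Subtype.ext (Subtype.ext hmm)
  -- group relations
  have hXmul : ∀ x : C, (SL3CentAux.phi ↑↑x) * (SL3CentAux.phi ↑↑(x⁻¹)) = 1 := by
    intro x
    have h : ((↑x : Matrix.SpecialLinearGroup (Fin 3) ℤ) * ↑(x⁻¹)) = 1 := by
      rw [← Subgroup.coe_mul, mul_inv_cancel, Subgroup.coe_one]
    have h2 : (↑↑x : Matrix (Fin 3) (Fin 3) ℤ) * ↑↑(x⁻¹) = 1 := by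
      calc (↑↑x : Matrix (Fin 3) (Fin 3) ℤ) * ↑↑(x⁻¹)
          = ((↑x * ↑(x⁻¹) : Matrix.SpecialLinearGroup (Fin 3) ℤ) :
              Matrix (Fin 3) (Fin 3) ℤ) := rfl
      _ = 1 := by rw [h]; rfl
    rw [← _root_.map_mul, h2, _root_.map_one]
  have hrel1 : ∀ x : C, (F x).1 * (F x⁻¹).1 = 1 := by
    intro x
    have h1 : (SL3CentAux.phi ↑↑x) *ᵥ ((SL3CentAux.phi ↑↑(x⁻¹)) *ᵥ v₁) = v₁ := by
      rw [Matrix.mulVec_mulVec, hXmul x, Matrix.one_mulVec]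
    rw [hF1 (x⁻¹), Matrix.mulVec_smul, hF1 x] at h1
    have h2 : ((F x).1 * (F x⁻¹).1 - 1) • v₁ = 0 := by
      rw [sub_smul, one_smul, mul_comm, mul_smul, h1, sub_self]
    rcases smul_eq_zero.mp h2 with h' | h'
    · linarith
    · exact absurd h' hz₁ne
  have hrel2 : ∀ x : C, (F x).2.1 * (F x⁻¹).2.1 - (F x).2.2 * (F x⁻¹).2.2 = 1 ∧
      (F x).2.1 * (F x⁻¹).2.2 + (F x⁻¹).2.1 * (F x).2.2 - (F x).2.2 * (F x⁻¹).2.2 = 0 := by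
    intro x
    have h1 : (SL3CentAux.phi ↑↑x) *ᵥ ((SL3CentAux.phi ↑↑(x⁻¹)) *ᵥ v₂) = v₂ := by
      rw [Matrix.mulVec_mulVec, hXmul x, Matrix.one_mulVec]
    rw [hF2 (x⁻¹), Matrix.mulVec_add, Matrix.mulVec_smul, Matrix.mulVec_smul,
      hF2 x, hF3 x] at h1
    have h2 : ((F x).2.1 * (F x⁻¹).2.1 - (F x).2.2 * (F x⁻¹).2.2 - 1) • v₂ +
        ((F x).2.1 * (F x⁻¹).2.2 + (F x⁻¹).2.1 * (F x).2.2 -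
          (F x).2.2 * (F x⁻¹).2.2) • (G *ᵥ v₂) = 0 := by
      have h3 : ((F x).2.1 * (F x⁻¹).2.1 - (F x).2.2 * (F x⁻¹).2.2 - 1) • v₂ +
          ((F x).2.1 * (F x⁻¹).2.2 + (F x⁻¹).2.1 * (F x).2.2 -
            (F x).2.2 * (F x⁻¹).2.2) • (G *ᵥ v₂)
          = ((F x⁻¹).2.1 • ((F x).2.1 • v₂ + (F x).2.2 • (G *ᵥ v₂)) +
            (F x⁻¹).2.2 • ((-(F x).2.2) • v₂ + ((F x).2.1 - (F x).2.2) • (G *ᵥ v₂))) - v₂ := by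
        module
      rw [h3, h1, sub_self]
    obtain ⟨hA, hB⟩ := hindep _ _ h2
    constructor
    · linarith
    · linarith
  have hrelq : ∀ x : C,
      ((F x).2.1 ^ 2 - (F x).2.1 * (F x).2.2 + (F x).2.2 ^ 2) *
      ((F x⁻¹).2.1 ^ 2 - (F x⁻¹).2.1 * (F x⁻¹).2.2 + (F x⁻¹).2.2 ^ 2) = 1 := by
    intro x
    obtain ⟨h1, h2⟩ := hrel2 x
    nlinarith [h1, h2, sq_nonneg ((F x).2.1 * (F x⁻¹).2.2 + (F x⁻¹).2.1 * (F x).2.2 -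
      (F x).2.2 * (F x⁻¹).2.2)]
  -- integrality
  have hGv₂cast : G *ᵥ v₂ = SL3CentAux.castVec (Az *ᵥ z₂) := by
    rw [hv₂def, hGdef]
    exact SL3CentAux.phi_mulVec Az z₂
  obtain ⟨i₀, hi₀⟩ : ∃ i₀, z₁ i₀ ≠ 0 := by
    by_contra hcon
    push_neg at hcon
    exact hz₁ne (funext fun i => by simp [hv₁def, SL3CentAux.castVec, hcon i])
  set N₁ : ℤ := z₁ i₀ with hN₁def
  obtain ⟨i₁, i₂, hDne⟩ : ∃ i₁ i₂ : Fin 3,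
      (z₂ i₁ * (Az *ᵥ z₂) i₂ - z₂ i₂ * (Az *ᵥ z₂) i₁ : ℤ) ≠ 0 := by
    by_contra hcon
    push_neg at hcon
    obtain ⟨k, hk⟩ : ∃ k, v₂ k ≠ 0 := by
      by_contra hcon2
      push_neg at hcon2
      exact hz₂ne (funext fun i => hcon2 i)
    have hprop : G *ᵥ v₂ = ((G *ᵥ v₂) k / v₂ k) • v₂ := by
      funext i
      have hint := hcon k i
      have hratq : v₂ k * (G *ᵥ v₂) i - v₂ i * (G *ᵥ v₂) k = 0 := by
        rw [hGv₂cast, hv₂def]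
        have : ((z₂ k * (Az *ᵥ z₂) i - z₂ i * (Az *ᵥ z₂) k : ℤ) : ℚ) = 0 := by
          rw [hint]; norm_num
        push_cast at this
        simpa [SL3CentAux.castVec] using this
      simp only [Pi.smul_apply, smul_eq_mul]
      field_simp
      linarith
    have := (hindep ((G *ᵥ v₂) k / v₂ k) (-1) (by
      rw [neg_one_smul, ← hprop]
      simp)).2
    norm_num at this
  set Dz : ℤ := z₂ i₁ * (Az *ᵥ z₂) i₂ - z₂ i₂ * (Az *ᵥ z₂) i₁ with hDzdef
  have hDcast : (Dz : ℚ) = v₂ i₁ * (G *ᵥ v₂) i₂ - v₂ i₂ * (G *ᵥ v₂) i₁ := by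
    rw [hGv₂cast, hv₂def, hDzdef]
    push_cast
    simp [SL3CentAux.castVec]
  have hN₁cast : (N₁ : ℚ) = v₁ i₀ := by
    rw [hv₁def, hN₁def]; rfl
  have hma : ∀ x : C, ∃ mα ma mb : ℤ,
      (mα : ℚ) = (N₁ : ℚ) * (F x).1 ∧ (ma : ℚ) = (Dz : ℚ) * (F x).2.1 ∧
      (mb : ℚ) = (Dz : ℚ) * (F x).2.2 := by
    intro x
    have hXv₁ : SL3CentAux.phi ↑↑x *ᵥ v₁ = SL3CentAux.castVec ((↑↑x : Matrix (Fin 3) (Fin 3) ℤ) *ᵥ z₁) := by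
      rw [hv₁def]; exact SL3CentAux.phi_mulVec _ _
    have hXv₂ : SL3CentAux.phi ↑↑x *ᵥ v₂ = SL3CentAux.castVec ((↑↑x : Matrix (Fin 3) (Fin 3) ℤ) *ᵥ z₂) := by
      rw [hv₂def]; exact SL3CentAux.phi_mulVec _ _
    have e₁ : ∀ i, (((↑↑x : Matrix (Fin 3) (Fin 3) ℤ) *ᵥ z₁) i : ℚ) = (F x).1 * v₁ i := by
      intro i
      have h := congrFun (hF1 x) i
      rw [hXv₁] at h
      simpa [SL3CentAux.castVec] using h
    have e₂ : ∀ i, (((↑↑x : Matrix (Fin 3) (Fin 3) ℤ) *ᵥ z₂) i : ℚ)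
        = (F x).2.1 * v₂ i + (F x).2.2 * (G *ᵥ v₂) i := by
      intro i
      have h := congrFun (hF2 x) i
      rw [hXv₂] at h
      simpa [SL3CentAux.castVec] using h
    refine ⟨((↑↑x : Matrix (Fin 3) (Fin 3) ℤ) *ᵥ z₁) i₀,
      ((↑↑x : Matrix (Fin 3) (Fin 3) ℤ) *ᵥ z₂) i₁ * (Az *ᵥ z₂) i₂ -
        ((↑↑x : Matrix (Fin 3) (Fin 3) ℤ) *ᵥ z₂) i₂ * (Az *ᵥ z₂) i₁,
      z₂ i₁ * ((↑↑x : Matrix (Fin 3) (Fin 3) ℤ) *ᵥ z₂) i₂ -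
        z₂ i₂ * ((↑↑x : Matrix (Fin 3) (Fin 3) ℤ) *ᵥ z₂) i₁, ?_, ?_, ?_⟩
    · rw [e₁ i₀, hN₁cast, mul_comm]
    · have hc₂ : ∀ i, ((Az *ᵥ z₂) i : ℚ) = (G *ᵥ v₂) i := by
        intro i; rw [hGv₂cast]; rfl
      push_cast
      rw [e₂ i₁, e₂ i₂, hc₂ i₁, hc₂ i₂, hDcast]
      ring
    · have hv₂c : ∀ i, ((z₂ i : ℤ) : ℚ) = v₂ i := by intro i; rw [hv₂def]; rfl
      push_cast
      rw [e₂ i₁, e₂ i₂, hv₂c i₁, hv₂c i₂, hDcast]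
      ring
  choose mα ma mb hmα hmaq hmbq using hma
  -- bounds
  set B : ℤ := N₁ ^ 2 + 2 * Dz ^ 2 with hBdef
  have hN₁ne : N₁ ≠ 0 := hi₀
  have hq2 : ∀ x : C, ((ma x ^ 2 - ma x * mb x + mb x ^ 2 : ℤ) : ℚ)
      = (Dz:ℚ)^2 * ((F x).2.1 ^ 2 - (F x).2.1 * (F x).2.2 + (F x).2.2 ^ 2) := by
    intro x
    push_cast
    rw [hmaq x, hmbq x]
    ring
  have hbound : ∀ x : C, |mα x| ≤ B ∧ |ma x| ≤ B ∧ |mb x| ≤ B := by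
    intro x
    have h1 := hrel1 x
    have hq := hrelq x
    -- mα x * mα x⁻¹ = N₁ ^ 2
    have hNprod : mα x * mα x⁻¹ = N₁ ^ 2 := by
      have hcast : ((mα x * mα x⁻¹ : ℤ) : ℚ) = ((N₁ ^ 2 : ℤ) : ℚ) := by
        push_cast
        rw [hmα x, hmα x⁻¹]
        linear_combination ((N₁:ℚ))^2 * h1
      exact_mod_cast hcast
    have hmα1 : 1 ≤ |mα x⁻¹| := by
      rcases eq_or_ne (mα x⁻¹) 0 with h0 | h0
      · rw [h0, mul_zero] at hNprod
        exact absurd hNprod.symm (pow_ne_zero 2 hN₁ne)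
      · exact Int.one_le_abs h0
    have habsα : |mα x| ≤ N₁ ^ 2 := by
      calc |mα x| ≤ |mα x| * |mα x⁻¹| := le_mul_of_one_le_right (abs_nonneg _) hmα1
      _ = |N₁ ^ 2| := by rw [← abs_mul, hNprod]
      _ = N₁ ^ 2 := abs_of_nonneg (sq_nonneg _)
    -- the quadratic part
    have hkprod : (ma x ^ 2 - ma x * mb x + mb x ^ 2) *
        (ma x⁻¹ ^ 2 - ma x⁻¹ * mb x⁻¹ + mb x⁻¹ ^ 2) = Dz ^ 4 := by
      have hcast : (((ma x ^ 2 - ma x * mb x + mb x ^ 2) *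
          (ma x⁻¹ ^ 2 - ma x⁻¹ * mb x⁻¹ + mb x⁻¹ ^ 2) : ℤ) : ℚ) = ((Dz ^ 4 : ℤ) : ℚ) := by
        push_cast [hq2 x, hq2 x⁻¹]
        linear_combination ((Dz:ℚ))^4 * hq
      exact_mod_cast hcast
    have hknn : 0 ≤ ma x ^ 2 - ma x * mb x + mb x ^ 2 := by nlinarith [sq_nonneg (ma x - mb x), sq_nonneg (ma x + mb x), sq_nonneg (ma x), sq_nonneg (mb x)]
    have hknn' : 0 ≤ ma x⁻¹ ^ 2 - ma x⁻¹ * mb x⁻¹ + mb x⁻¹ ^ 2 := by nlinarith [sq_nonneg (ma x⁻¹ - mb x⁻¹), sq_nonneg (ma x⁻¹ + mb x⁻¹), sq_nonneg (ma x⁻¹), sq_nonneg (mb x⁻¹)]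
    have hDz4 : 0 < Dz ^ 4 := by positivity
    have hk1' : 1 ≤ ma x⁻¹ ^ 2 - ma x⁻¹ * mb x⁻¹ + mb x⁻¹ ^ 2 := by
      rcases lt_or_eq_of_le hknn' with h' | h'
      · omega
      · rw [← h', mul_zero] at hkprod
        omega
    have hkle : ma x ^ 2 - ma x * mb x + mb x ^ 2 ≤ Dz ^ 4 := by
      calc ma x ^ 2 - ma x * mb x + mb x ^ 2
          ≤ (ma x ^ 2 - ma x * mb x + mb x ^ 2) *
            (ma x⁻¹ ^ 2 - ma x⁻¹ * mb x⁻¹ + mb x⁻¹ ^ 2) :=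
        le_mul_of_one_le_right hknn hk1'
      _ = Dz ^ 4 := hkprod
    have hma2 : ma x ^ 2 ≤ 4 * Dz ^ 4 := by
      nlinarith [sq_nonneg (ma x - mb x), sq_nonneg (mb x), hDz4.le]
    have hmb2 : mb x ^ 2 ≤ 4 * Dz ^ 4 := by
      nlinarith [sq_nonneg (ma x - mb x), sq_nonneg (ma x), hDz4.le]
    have habsa : |ma x| ≤ 2 * Dz ^ 2 := by
      nlinarith [sq_abs (ma x), abs_nonneg (ma x), sq_nonneg (Dz ^ 2), hma2,
        sq_nonneg (|ma x| - 2 * Dz ^ 2), sq_nonneg (|ma x| + 2 * Dz ^ 2)]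
    have habsb : |mb x| ≤ 2 * Dz ^ 2 := by
      nlinarith [sq_abs (mb x), abs_nonneg (mb x), sq_nonneg (Dz ^ 2), hmb2,
        sq_nonneg (|mb x| - 2 * Dz ^ 2), sq_nonneg (|mb x| + 2 * Dz ^ 2)]
    refine ⟨?_, ?_, ?_⟩
    · rw [hBdef]; nlinarith [sq_nonneg Dz]
    · rw [hBdef]; nlinarith [sq_nonneg N₁]
    · rw [hBdef]; nlinarith [sq_nonneg N₁]
  -- conclude
  have hDzq : (Dz:ℚ) ≠ 0 := Int.cast_ne_zero.mpr hDne
  have hN₁q : (N₁:ℚ) ≠ 0 := Int.cast_ne_zero.mpr hi₀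
  have hinj2 : Function.Injective (fun x : C => (mα x, ma x, mb x)) := by
    intro x y h
    simp only [Prod.mk.injEq] at h
    apply hFinj
    have e1 : (F x).1 = (F y).1 := by
      have hh : (N₁:ℚ) * (F x).1 = (N₁:ℚ) * (F y).1 := by
        rw [← hmα x, ← hmα y, h.1]
      exact mul_left_cancel₀ hN₁q hh
    have e2 : (F x).2.1 = (F y).2.1 := by
      have hh : (Dz:ℚ) * (F x).2.1 = (Dz:ℚ) * (F y).2.1 := by
        rw [← hmaq x, ← hmaq y, h.2.1]
      exact mul_left_cancel₀ hDzq hh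
    have e3 : (F x).2.2 = (F y).2.2 := by
      have hh : (Dz:ℚ) * (F x).2.2 = (Dz:ℚ) * (F y).2.2 := by
        rw [← hmbq x, ← hmbq y, h.2.2]
      exact mul_left_cancel₀ hDzq hh
    exact Prod.ext_iff.mpr ⟨e1, Prod.ext_iff.mpr ⟨e2, e3⟩⟩
  have : Finite (Set.Icc (-B) B) := Set.finite_Icc _ _
  refine Finite.of_injective (fun x : C =>
    ((⟨mα x, ?_⟩ : Set.Icc (-B) B), (⟨ma x, ?_⟩ : Set.Icc (-B) B),
      (⟨mb x, ?_⟩ : Set.Icc (-B) B))) ?_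
  · exact Set.mem_Icc.mpr (abs_le.mp (hbound x).1)
  · exact Set.mem_Icc.mpr (abs_le.mp (hbound x).2.1)
  · exact Set.mem_Icc.mpr (abs_le.mp (hbound x).2.2)
  · intro x y h
    apply hinj2
    simp only [Prod.mk.injEq, Subtype.mk.injEq] at h ⊢
    exact ⟨h.1, h.2.1, h.2.2⟩
end

section
/- In SL_2(ℤ), the centralizer of the order-3 matrix A' = [[0,−1],[1,−1]] is the cyclic subgroup generated by the matrix M = [[1,−1],[1,0]], and M has order 6. -/
/-- The matrix `A' = [[0,−1],[1,−1]]` as an element of `SL₂(ℤ)`. -/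
def Aprime : Matrix.SpecialLinearGroup (Fin 2) ℤ :=
  ⟨!![0, -1; 1, -1], by norm_num [Matrix.det_fin_two_of]⟩

/-- The matrix `M = [[1,−1],[1,0]]` as an element of `SL₂(ℤ)`. -/
def Mmat : Matrix.SpecialLinearGroup (Fin 2) ℤ :=
  ⟨!![1, -1; 1, 0], by norm_num [Matrix.det_fin_two_of]⟩

lemma SL_coe_pow' (A : Matrix.SpecialLinearGroup (Fin 2) ℤ) (m : ℕ) :
    ((A ^ m : Matrix.SpecialLinearGroup (Fin 2) ℤ) : Matrix (Fin 2) (Fin 2) ℤ) =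
      (A : Matrix (Fin 2) (Fin 2) ℤ) ^ m :=
  Matrix.SpecialLinearGroup.coe_pow A m

lemma SL_coe_mul' (A B : Matrix.SpecialLinearGroup (Fin 2) ℤ) :
    ((A * B : Matrix.SpecialLinearGroup (Fin 2) ℤ) : Matrix (Fin 2) (Fin 2) ℤ) =
      (A : Matrix (Fin 2) (Fin 2) ℤ) * B :=
  Matrix.SpecialLinearGroup.coe_mul A B

lemma mem_zpowers_of_comm (x : Matrix.SpecialLinearGroup (Fin 2) ℤ)
    (hc : Aprime * x = x * Aprime) : x ∈ Subgroup.zpowers Mmat := by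
  have hm : (Aprime : Matrix (Fin 2) (Fin 2) ℤ) * x = x * Aprime :=
    congr_arg Subtype.val hc
  set a := (x : Matrix (Fin 2) (Fin 2) ℤ) 0 0 with ha
  set b := (x : Matrix (Fin 2) (Fin 2) ℤ) 0 1 with hb
  set c := (x : Matrix (Fin 2) (Fin 2) ℤ) 1 0 with hcc
  set d := (x : Matrix (Fin 2) (Fin 2) ℤ) 1 1 with hd
  have e1 := congr_fun (congr_fun hm 0) 0
  have e2 := congr_fun (congr_fun hm 0) 1
  simp [Aprime, Matrix.mul_apply, Fin.sum_univ_two, ← ha, ← hb, ← hcc, ← hd] at e1 e2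
  have hdet : a * d - b * c = 1 := by
    have := x.2
    rwa [Matrix.det_fin_two, ← ha, ← hb, ← hcc, ← hd] at this
  have hcb : c = -b := by omega
  have hdd : d = a + b := by omega
  have key : a*a + a*b + b*b = 1 := by rw [hdd, hcb] at hdet; ring_nf at hdet ⊢; linarith
  have hb2 : b^2 ≤ 1 := by nlinarith [sq_nonneg (2*a+b), key]
  have ha2 : a^2 ≤ 1 := by nlinarith [sq_nonneg (a+2*b), key]
  have hbl : -1 ≤ b := by nlinarith
  have hbu : b ≤ 1 := by nlinarith
  have hal : -1 ≤ a := by nlinarith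
  have hau : a ≤ 1 := by nlinarith
  clear_value a b c d
  have memk : ∀ k : ℕ, Mmat ^ k = x → x ∈ Subgroup.zpowers Mmat := by
    intro k hk
    exact hk ▸ pow_mem (Subgroup.mem_zpowers Mmat) k
  interval_cases b <;> interval_cases a
  · exact absurd key (by norm_num)
  · refine memk 2 ?_
    ext i j
    fin_cases i <;> fin_cases j <;>
      simp only [SL_coe_pow', SL_coe_mul'] <;> simp [Mmat, pow_succ, Matrix.mul_apply, Fin.sum_univ_two] <;> omega
  · refine memk 1 ?_
    ext i j
    fin_cases i <;> fin_cases j <;>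
      simp only [SL_coe_pow', SL_coe_mul'] <;> simp [Mmat, pow_succ, Matrix.mul_apply, Fin.sum_univ_two] <;> omega
  · refine memk 3 ?_
    ext i j
    fin_cases i <;> fin_cases j <;>
      simp only [SL_coe_pow', SL_coe_mul'] <;> simp [Mmat, pow_succ, Matrix.mul_apply, Fin.sum_univ_two] <;> omega
  · exact absurd key (by norm_num)
  · refine memk 0 ?_
    ext i j
    fin_cases i <;> fin_cases j <;>
      simp only [SL_coe_pow', SL_coe_mul'] <;> simp [Mmat, pow_succ, Matrix.mul_apply, Fin.sum_univ_two, Matrix.one_apply] <;> omega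
  · refine memk 4 ?_
    ext i j
    fin_cases i <;> fin_cases j <;>
      simp only [SL_coe_pow', SL_coe_mul'] <;> simp [Mmat, pow_succ, Matrix.mul_apply, Fin.sum_univ_two] <;> omega
  · refine memk 5 ?_
    ext i j
    fin_cases i <;> fin_cases j <;>
      simp only [SL_coe_pow', SL_coe_mul'] <;> simp [Mmat, pow_succ, Matrix.mul_apply, Fin.sum_univ_two] <;> omega
  · exact absurd key (by norm_num)

lemma Aprime_pow_three : Aprime ^ 3 = 1 := by
  ext i j
  fin_cases i <;> fin_cases j <;>
    simp only [SL_coe_pow', SL_coe_mul'] <;> simp [Aprime, pow_succ, Matrix.mul_apply, Fin.sum_univ_two, Matrix.one_apply]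

lemma Mmat_pow_six : Mmat ^ 6 = 1 := by
  ext i j
  fin_cases i <;> fin_cases j <;>
    simp only [SL_coe_pow', SL_coe_mul'] <;> simp [Mmat, pow_succ, Matrix.mul_apply, Fin.sum_univ_two, Matrix.one_apply]

lemma Mmat_comm : Aprime * Mmat = Mmat * Aprime := by
  ext i j
  fin_cases i <;> fin_cases j <;>
    simp only [SL_coe_pow', SL_coe_mul'] <;> simp [Aprime, Mmat, Matrix.mul_apply, Fin.sum_univ_two]

lemma pow_ne00 (k : ℕ) (h : ((Mmat ^ k : Matrix.SpecialLinearGroup (Fin 2) ℤ) :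
    Matrix (Fin 2) (Fin 2) ℤ) 0 0 ≠ (1 : ℤ)) : Mmat ^ k ≠ 1 := by
  intro he
  rw [he] at h
  simp at h

lemma pow_ne (k : ℕ) (h : ((Mmat ^ k : Matrix.SpecialLinearGroup (Fin 2) ℤ) :
    Matrix (Fin 2) (Fin 2) ℤ) 0 1 ≠ (0 : ℤ)) : Mmat ^ k ≠ 1 := by
  intro he
  rw [he] at h
  simp at h

/-- In `SL₂(ℤ)`, the matrix `A'` has order 3, its centralizer is the cyclic subgroup
generated by `M`, and `M` has order 6. -/
theorem centralizer_of_Aprime :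
    orderOf Aprime = 3 ∧
    Subgroup.centralizer ({Aprime} : Set (Matrix.SpecialLinearGroup (Fin 2) ℤ)) =
      Subgroup.zpowers Mmat ∧
    orderOf Mmat = 6 := by
  have hM6 := Mmat_pow_six
  have hM1 : Mmat ^ 1 ≠ 1 := by
    apply pow_ne; simp only [SL_coe_pow', SL_coe_mul'] <;> simp [Mmat]
  have hM2 : Mmat ^ 2 ≠ 1 := by
    apply pow_ne; simp only [SL_coe_pow', SL_coe_mul'] <;> simp [Mmat, pow_succ, Matrix.mul_apply, Fin.sum_univ_two]
  have hM3 : Mmat ^ 3 ≠ 1 := by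
    apply pow_ne00; simp only [SL_coe_pow', SL_coe_mul'] <;> simp [Mmat, pow_succ, Matrix.mul_apply, Fin.sum_univ_two]
  refine ⟨?_, ?_, ?_⟩
  · haveI : Fact (Nat.Prime 3) := ⟨by norm_num⟩
    refine orderOf_eq_prime Aprime_pow_three ?_
    intro h
    have := congr_fun (congr_fun (congr_arg Subtype.val h) 0) 1
    simp [Aprime, Matrix.one_apply] at this
  · apply le_antisymm
    · intro x hx
      rw [Subgroup.mem_centralizer_iff] at hx
      exact mem_zpowers_of_comm x (hx Aprime (Set.mem_singleton _))
    · rw [Subgroup.zpowers_le]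
      rw [Subgroup.mem_centralizer_iff]
      intro g hg
      rw [Set.mem_singleton_iff] at hg
      subst hg
      exact Mmat_comm
  · have hdvd : orderOf Mmat ∣ 6 := orderOf_dvd_of_pow_eq_one hM6
    have hpos : 0 < orderOf Mmat := by
      refine orderOf_pos_iff.mpr ?_
      exact isOfFinOrder_iff_pow_eq_one.mpr ⟨6, by norm_num, hM6⟩
    have hle : orderOf Mmat ≤ 6 := Nat.le_of_dvd (by norm_num) hdvd
    have hp := pow_orderOf_eq_one Mmat
    set n := orderOf Mmat with hn
    clear_value n
    interval_cases n
    · exact absurd hp hM1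
    · exact absurd hp hM2
    · exact absurd hp hM3
    · exact absurd hdvd (by norm_num)
    · exact absurd hdvd (by norm_num)
    · rfl
end

section
/- Let n ≥ 1 and let S_3 be the symmetric group on 3 letters. Then twice the number of orbits of the simultaneous conjugation action of S_3 on the set (S_3)_{n,3} of n-tuples of pairwise commuting 3-power order elements equals 3ⁿ + 1; that is, |S_3 \ (S_3)_{n,3}| = (3ⁿ − 1)/2 + 1. -/
namespace S3aux

abbrev G3 := Equiv.Perm (Fin 3)

lemma card_G3 : Fintype.card G3 = 6 := by
  simp [Fintype.card_perm]; rfl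

lemma cube_comm' : ∀ x y : G3, x ^ 3 = 1 → y ^ 3 = 1 → x * y = y * x := by decide

lemma cube_comm (x y : G3) (hx : x ^ 3 = 1) (hy : y ^ 3 = 1) : Commute x y :=
  cube_comm' x y hx hy

lemma mem_iff_cube (x : G3) : (∃ k : ℕ, orderOf x = 3 ^ k) ↔ x ^ 3 = 1 := by
  constructor
  · rintro ⟨k, hk⟩
    have h6 : orderOf x ∣ 6 := by
      have := orderOf_dvd_card (x := x); rwa [card_G3] at this
    rw [hk] at h6
    have hk1 : k ≤ 1 := by
      by_contra h
      have h9 : (9 : ℕ) ∣ 6 := dvd_trans (by exact pow_dvd_pow 3 (by omega : 2 ≤ k)) h6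
      have := Nat.le_of_dvd (by norm_num) h9
      omega
    have hd : orderOf x ∣ 3 := by
      rw [hk]
      calc (3:ℕ)^k ∣ 3^1 := pow_dvd_pow 3 hk1
        _ = 3 := pow_one 3
    exact orderOf_dvd_iff_pow_eq_one.mp hd
  · intro h
    have hd : orderOf x ∣ 3 := orderOf_dvd_of_pow_eq_one h
    rcases (Nat.prime_three).eq_one_or_self_of_dvd _ hd with h1 | h3
    · exact ⟨0, by simpa using h1⟩
    · exact ⟨1, by simpa using h3⟩

def Cset (g : G3) : Finset G3 := Finset.univ.filter (fun x => x ^ 3 = 1 ∧ g * x * g⁻¹ = x)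

lemma card_Cset : ∀ g : G3, (Cset g).card = if g ^ 3 = 1 then 3 else 1 := by decide

lemma card_cube_filter : (Finset.univ.filter (fun g : G3 => g ^ 3 = 1)).card = 3 := by decide

variable (n : ℕ)

instance : MulAction G3 (pTuples G3 3 n) where
  smul g v := ⟨fun i => g * v.1 i * g⁻¹, by
    obtain ⟨hc, ho⟩ := v.2
    refine ⟨fun i j => ?_, fun i => ?_⟩
    · have := (hc i j).map (MulAut.conj g).toMonoidHom
      simpa [MulAut.conj] using this
    · have hs : SemiconjBy g (v.1 i) (g * v.1 i * g⁻¹) := by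
        unfold SemiconjBy; group
      rw [← hs.orderOf_eq]; exact ho i⟩
  one_smul v := by
    apply Subtype.ext; funext i
    show (1 : G3) * v.1 i * (1 : G3)⁻¹ = v.1 i
    group
  mul_smul g h v := by
    apply Subtype.ext; funext i
    show (g * h) * v.1 i * (g * h)⁻¹ = g * (h * v.1 i * h⁻¹) * g⁻¹
    group

lemma smul_def (g : G3) (v : pTuples G3 3 n) (i : Fin n) :
    (g • v).1 i = g * v.1 i * g⁻¹ := rfl

end S3aux


open S3aux MulAction in
/-- Twice the number of orbits of the symmetric group `S₃` acting by simultaneous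
conjugation on `(S₃)_{n,3}` equals `3ⁿ + 1`. -/
theorem s3_orbit_count (n : ℕ) (hn : 1 ≤ n) :
    2 * Nat.card (Quot (tupleConj (pTuples (Equiv.Perm (Fin 3)) 3 n))) = 3 ^ n + 1 := by
  classical
  set S := pTuples G3 3 n with hS
  -- identify Quot tupleConj with the orbit quotient
  have hrel : ∀ a b : S, tupleConj S a b ↔ (orbitRel G3 S).r a b := by
    intro a b
    constructor
    · rintro ⟨g, hg⟩
      refine ⟨g⁻¹, ?_⟩
      apply Subtype.ext; funext i
      rw [smul_def]
      rw [← hg i]; group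
    · rintro ⟨g, hg⟩
      refine ⟨g⁻¹, fun i => ?_⟩
      have hg' : g • b = a := hg
      have h1 : (g • b).1 i = a.1 i := by rw [hg']
      have h2 : g * b.1 i * g⁻¹ = a.1 i := h1
      rw [← h2]; group
  have hquot : Nat.card (Quot (tupleConj S)) = Nat.card (orbitRel.Quotient G3 S) := by
    exact Nat.card_congr (Quot.congrRight hrel)
  -- Burnside
  haveI : Fintype S := Fintype.ofFinite _
  haveI : ∀ g : G3, Fintype (fixedBy S g) := fun g => Fintype.ofFinite _
  haveI : Fintype (orbitRel.Quotient G3 S) := Fintype.ofFinite _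
  have hburn := sum_card_fixedBy_eq_card_orbits_mul_card_group G3 S
  rw [card_G3] at hburn
  -- compute fixed point counts
  have hfix : ∀ g : G3, Fintype.card (fixedBy S g) = (Cset g).card ^ n := by
    intro g
    have e : fixedBy S g ≃ (Fin n → Cset g) := by
      refine ⟨fun v i => ⟨v.1.1 i, ?_⟩, fun w => ⟨⟨fun i => (w i).1, ?_, ?_⟩, ?_⟩, ?_, ?_⟩
      · simp only [Cset, Finset.mem_filter, Finset.mem_univ, true_and]
        refine ⟨(mem_iff_cube _).mp (v.1.2.2 i), ?_⟩
        have h1 : (g • v.1).1 i = v.1.1 i := by rw [v.2]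
        exact h1
      · intro i j
        have hi := (w i).2; have hj := (w j).2
        simp only [Cset, Finset.mem_filter] at hi hj
        exact cube_comm _ _ hi.2.1 hj.2.1
      · intro i
        have hi := (w i).2
        simp only [Cset, Finset.mem_filter] at hi
        exact (mem_iff_cube _).mpr hi.2.1
      · show g • (⟨fun i => (w i).1, _⟩ : S) = _
        apply Subtype.ext; funext i
        rw [smul_def]
        have hi := (w i).2
        simp only [Cset, Finset.mem_filter] at hi
        exact hi.2.2
      · intro v; apply Subtype.ext; apply Subtype.ext; funext i; rfl
      · intro w; funext i; rfl
    rw [Fintype.card_congr e, Fintype.card_fun]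
    simp [Fintype.card_coe]
  rw [Finset.sum_congr rfl (fun g _ => hfix g)] at hburn
  have hsum : ∑ g : G3, (Cset g).card ^ n = 3 * 3 ^ n + 3 := by
    rw [← Finset.sum_filter_add_sum_filter_not Finset.univ (fun g : G3 => g ^ 3 = 1)]
    have h1 : ∀ g ∈ Finset.univ.filter (fun g : G3 => g ^ 3 = 1),
        (Cset g).card ^ n = 3 ^ n := by
      intro g hg
      simp only [Finset.mem_filter] at hg
      rw [card_Cset g, if_pos hg.2]
    have h2 : ∀ g ∈ Finset.univ.filter (fun g : G3 => ¬ g ^ 3 = 1),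
        (Cset g).card ^ n = 1 := by
      intro g hg
      simp only [Finset.mem_filter] at hg
      rw [card_Cset g, if_neg hg.2, one_pow]
    rw [Finset.sum_congr rfl h1, Finset.sum_congr rfl h2,
      Finset.sum_const, Finset.sum_const, card_cube_filter]
    have h3 : (Finset.univ.filter (fun g : G3 => ¬ g ^ 3 = 1)).card = 3 := by
      have := Finset.card_filter_add_card_filter_not
        (s := (Finset.univ : Finset G3)) (p := fun g : G3 => g ^ 3 = 1)
      rw [card_cube_filter, Finset.card_univ, card_G3] at this
      omega
    rw [h3]; ring
  rw [hsum] at hburn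
  rw [hquot, Nat.card_eq_fintype_card]
  set N := Fintype.card (orbitRel.Quotient G3 S)
  set t := 3 ^ n
  omega
end

section
/- Let n ≥ 1. Then twice the number of orbits of the simultaneous conjugation action of GL_2(ℤ) on the set GL_2(ℤ)_{n,3} of n-tuples of pairwise commuting 3-power order elements equals 3ⁿ + 1; that is, |GL_2(ℤ) \ GL_2(ℤ)_{n,3}| = (3ⁿ + 1)/2. -/
abbrev G2 := Matrix.GeneralLinearGroup (Fin 2) ℤ
abbrev M2 := Matrix (Fin 2) (Fin 2) ℤ

lemma sq_eq (M : M2) : M*M = (Matrix.trace M) • M - (Matrix.det M) • 1 := by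
  rw [Matrix.eta_fin_two M]
  ext i j
  fin_cases i <;> fin_cases j <;>
    simp [Matrix.mul_fin_two, Matrix.trace_fin_two, Matrix.det_fin_two, Matrix.one_fin_two] <;> ring

lemma mul_lin {M : M2} {t d : ℤ} (h : M*M = t•M - d•1) (x y x' y' : ℤ) :
    (x•M + y•1)*(x'•M + y'•1) = (x*x'*t + x*y' + x'*y)•M + (y*y' - x*x'*d)•1 := by
  rw [add_mul, mul_add, mul_add, smul_mul_assoc, smul_mul_assoc, smul_mul_assoc, smul_mul_assoc,
    mul_smul_comm, mul_smul_comm, mul_smul_comm, mul_smul_comm, h, one_mul, mul_one, mul_one]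
  module

lemma lin_mul_M {M : M2} {t d : ℤ} (h : M*M = t•M - d•1) (x y : ℤ) :
    (x•M + y•1)*M = (x*t + y)•M + (-(x*d))•1 := by
  have eM : ((1:ℤ)•M + (0:ℤ)•1) = M := by module
  calc (x•M + y•1)*M = (x•M + y•1)*((1:ℤ)•M + (0:ℤ)•1) := by rw [eM]
    _ = (x*1*t + x*0 + 1*y)•M + (y*0 - x*1*d)•1 := mul_lin h x y 1 0
    _ = (x*t + y)•M + (-(x*d))•1 := by ring_nf

lemma scalar_of (M : M2) (u v : ℤ) (hu : u ≠ 0) (h : u•M + v•1 = 1) :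
    ∃ a : ℤ, M = a • (1 : M2) := by
  have h01 : u * M 0 1 = 0 := by
    have := congrFun (congrFun h 0) 1
    simpa only [Matrix.add_apply, Matrix.smul_apply, Matrix.one_apply, smul_eq_mul, if_true, if_false, Fin.one_eq_zero_iff, Fin.zero_eq_one_iff, Nat.succ_ne_self, ite_true, ite_false, mul_one, mul_zero, add_zero, one_ne_zero, zero_ne_one, if_neg, OfNat.ofNat_ne_one, reduceIte] using this
  have h10 : u * M 1 0 = 0 := by
    have := congrFun (congrFun h 1) 0
    simpa only [Matrix.add_apply, Matrix.smul_apply, Matrix.one_apply, smul_eq_mul, if_true, if_false, Fin.one_eq_zero_iff, Fin.zero_eq_one_iff, Nat.succ_ne_self, ite_true, ite_false, mul_one, mul_zero, add_zero, one_ne_zero, zero_ne_one, if_neg, OfNat.ofNat_ne_one, reduceIte] using this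
  have h00 : u * M 0 0 + v = 1 := by
    have := congrFun (congrFun h 0) 0
    simpa only [Matrix.add_apply, Matrix.smul_apply, Matrix.one_apply, smul_eq_mul, if_true, if_false, Fin.one_eq_zero_iff, Fin.zero_eq_one_iff, Nat.succ_ne_self, ite_true, ite_false, mul_one, mul_zero, add_zero, one_ne_zero, zero_ne_one, if_neg, OfNat.ofNat_ne_one, reduceIte] using this
  have h11 : u * M 1 1 + v = 1 := by
    have := congrFun (congrFun h 1) 1
    simpa only [Matrix.add_apply, Matrix.smul_apply, Matrix.one_apply, smul_eq_mul, if_true, if_false, Fin.one_eq_zero_iff, Fin.zero_eq_one_iff, Nat.succ_ne_self, ite_true, ite_false, mul_one, mul_zero, add_zero, one_ne_zero, zero_ne_one, if_neg, OfNat.ofNat_ne_one, reduceIte] using this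
  refine ⟨M 0 0, ?_⟩
  have e1 : M 0 1 = 0 := by rcases mul_eq_zero.mp h01 with h | h; exacts [absurd h hu, h]
  have e2 : M 1 0 = 0 := by rcases mul_eq_zero.mp h10 with h | h; exacts [absurd h hu, h]
  have e3 : M 1 1 = M 0 0 := mul_left_cancel₀ hu (by omega)
  rw [Matrix.eta_fin_two M, e1, e2, e3]
  ext i j
  fin_cases i <;> fin_cases j <;> simp [Matrix.one_fin_two]

lemma pow3_lin {M : M2} {t : ℤ} (h : M*M = t•M - 1•1) :
    M*M*M = (t^2-1)•M + (-t)•1 := by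
  have e1 : M*M = t•M + (-1)•1 := by rw [h]; module
  rw [e1, lin_mul_M h t (-1)]
  ring_nf

lemma pow9_lin {M : M2} {t : ℤ} (h : M*M = t•M - 1•1) :
    (M*M*M)*(M*M*M)*(M*M*M) =
      (t^8 - 7*t^6 + 15*t^4 - 10*t^2 + 1)•M + (-(t^7 - 6*t^5 + 10*t^3 - 4*t))•1 := by
  rw [pow3_lin h, mul_lin h, mul_lin h]
  ring_nf

lemma smul_one_mul_smul_one (x y : ℤ) : (x•(1:M2))*(y•(1:M2)) = (x*y)•(1:M2) := by
  rw [smul_mul_assoc, mul_smul_comm, one_mul, smul_smul]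

lemma det_one_of_odd_pow (B : G2) {m : ℕ} (hm : Odd m) (h : B^m = 1) :
    Matrix.det (B : M2) = 1 := by
  have hd : (Matrix.det (B : M2))^m = 1 := by
    have : ((B^m : G2) : M2) = 1 := by rw [h]; rfl
    calc (Matrix.det (B : M2))^m = Matrix.det ((B:M2)^m) := (Matrix.det_pow _ _).symm
      _ = Matrix.det ((1:M2)) := by rw [← Units.val_pow_eq_pow_val, this]
      _ = 1 := Matrix.det_one
  rcases Int.isUnit_iff.mp (Matrix.isUnit_iff_isUnit_det (B : M2) |>.mp B.isUnit) with h1 | h1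
  · exact h1
  · exfalso
    rw [h1, Odd.neg_one_pow hm] at hd
    norm_num at hd

lemma cube_val (B : G2) : ((B^3 : G2) : M2) = (B:M2)*(B:M2)*(B:M2) := by
  rw [Units.val_pow_eq_pow_val, pow_succ, pow_succ, pow_one]

lemma pow9_imp_pow3 (B : G2) (h : B^9 = 1) : B^3 = 1 := by
  set M := (B : M2) with hM
  have hdet : Matrix.det M = 1 := det_one_of_odd_pow B (by decide) h
  set t := Matrix.trace M with ht
  have h2 : M*M = t•M - (1:ℤ)•1 := by rw [sq_eq M, ← ht, hdet]
  have h9 : (M*M*M)*(M*M*M)*(M*M*M) = 1 := by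
    have h' : ((B^9 : G2) : M2) = 1 := by rw [h]; rfl
    rw [Units.val_pow_eq_pow_val] at h'
    rw [← h']; noncomm_ring
  have key := (pow9_lin h2).symm.trans h9
  suffices hM3 : M*M*M = 1 by
    apply Units.ext
    rw [cube_val]; exact hM3
  by_cases hu : (t^8 - 7*t^6 + 15*t^4 - 10*t^2 + 1) = 0
  · have habs : t = 0 ∨ t = 1 ∨ t = -1 ∨ 2 ≤ t ∨ t ≤ -2 := by omega
    have ht2 : t = 1 ∨ t = -1 := by
      rcases habs with h' | h' | h' | h' | h'
      · rw [h'] at hu; norm_num at hu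
      · left; exact h'
      · right; exact h'
      · exfalso; nlinarith [sq_nonneg (t^2 - 4), sq_nonneg (t^2*(t-2)), sq_nonneg t, sq_nonneg (t-2), sq_nonneg (t*(t-2))]
      · exfalso; nlinarith [sq_nonneg (t^2 - 4), sq_nonneg (t^2*(t+2)), sq_nonneg t, sq_nonneg (t+2), sq_nonneg (t*(t+2))]
    rcases ht2 with ht1 | ht1
    · -- t = 1 : M^3 = -1, M^9 = -1 ≠ 1
      exfalso
      have hm3 : M*M*M = -1 := by
        rw [pow3_lin h2, ht1]; norm_num
      rw [hm3] at h9
      have h11 : (-1 : M2) = 1 := by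
        calc (-1 : M2) = -1 * -1 * -1 := by noncomm_ring
          _ = 1 := h9
      exact absurd h11 (by decide)
    · rw [pow3_lin h2, ht1]; norm_num
  · rcases scalar_of M _ _ hu key with ⟨a, ha⟩
    have hdet2 : a * a = 1 := by
      rw [ha, Matrix.det_fin_two] at hdet
      simpa [Matrix.smul_apply, Matrix.one_apply] using hdet
    have ha1 : a = 1 := by
      have h9' : (a*a*a*(a*a*a)*(a*a*a)) • (1:M2) = 1 := by
        rw [ha] at h9
        simpa only [smul_one_mul_smul_one] using h9
      have ha9 : a*a*a*(a*a*a)*(a*a*a) = 1 := by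
        have := congrFun (congrFun h9' 0) 0
        simpa [Matrix.one_apply] using this
      rcases lt_trichotomy a 1 with hlt | he | hgt
      · exfalso
        have h0 : a ≤ 0 := by omega
        have : a^9 ≤ 0 := Odd.pow_nonpos (by decide) h0
        nlinarith
      · exact he
      · exfalso
        have : 1 < a^9 := one_lt_pow₀ hgt (by norm_num)
        nlinarith
    rw [ha, ha1]
    norm_num

-- order-3 structure
lemma order3_rel (B : G2) (h3 : B^3 = 1) (h1 : B ≠ 1) :
    (B:M2)*(B:M2) + (B:M2) + 1 = 0 := by
  set M := (B : M2) with hM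
  have hdet : Matrix.det M = 1 := det_one_of_odd_pow B (by decide) h3
  set t := Matrix.trace M with ht
  have h2 : M*M = t•M - (1:ℤ)•1 := by rw [sq_eq M, ← ht, hdet]
  have h3' : M*M*M = 1 := by rw [← cube_val, h3]; rfl
  have key : (t^2-1)•M + (-t)•1 = 1 := by rw [← pow3_lin h2, h3']
  by_cases hu : t^2 - 1 = 0
  · have ht2 : t = 1 ∨ t = -1 := by
      have : (t-1)*(t+1) = 0 := by ring_nf; linarith [hu]
      rcases mul_eq_zero.mp this with h | h
      · left; omega
      · right; omega
    rcases ht2 with h' | h'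
    · exfalso
      have hm3 : M*M*M = -1 := by rw [pow3_lin h2, h']; norm_num
      rw [h3'] at hm3
      exact absurd hm3.symm (by decide)
    · have : M*M = -M - 1 := by
        rw [h2, h']; module
      rw [this]; noncomm_ring
  · exfalso
    rcases scalar_of M _ _ hu key with ⟨a, ha⟩
    have ha3 : a*a*a = 1 := by
      have hh : ∀ x y : ℤ, (x•(1:M2))*(y•(1:M2)) = (x*y)•(1:M2) := by
        intro x y; rw [smul_mul_assoc, mul_smul_comm, one_mul, smul_smul]
      have h9' : (a*a*a) • (1:M2) = 1 := by
        rw [ha] at h3'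
        rw [hh, hh] at h3'
        exact h3'
      have := congrFun (congrFun h9' 0) 0
      simpa [Matrix.one_apply] using this
    have ha1 : a = 1 := by nlinarith [sq_nonneg (a-1), sq_nonneg (a+1), sq_nonneg a]
    apply h1
    apply Units.ext
    rw [← hM, ha, ha1, one_smul]
    rfl

-- entries structure of a matrix with X²+X+1=0
lemma rel_entries (X : M2) (h : X*X + X + 1 = 0) :
    X 1 1 = -1 - X 0 0 ∧ X 0 1 * X 1 0 = -(X 0 0)^2 - X 0 0 - 1 := by
  set a := X 0 0; set b := X 0 1; set c := X 1 0; set e := X 1 1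
  have h00 : a*a + b*c + a + 1 = 0 := by
    have := congrFun (congrFun h 0) 0
    simpa [Matrix.mul_apply, Fin.sum_univ_two, Matrix.one_apply] using this
  have h01 : a*b + b*e + b = 0 := by
    have := congrFun (congrFun h 0) 1
    simpa [Matrix.mul_apply, Fin.sum_univ_two, Matrix.one_apply] using this
  have h10 : c*a + e*c + c = 0 := by
    have := congrFun (congrFun h 1) 0
    simpa [Matrix.mul_apply, Fin.sum_univ_two, Matrix.one_apply] using this
  have h11 : c*b + e*e + e + 1 = 0 := by
    have := congrFun (congrFun h 1) 1
    simpa [Matrix.mul_apply, Fin.sum_univ_two, Matrix.one_apply] using this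
  have htr : e = -1 - a := by
    by_cases hs : a + e + 1 = 0
    · omega
    · exfalso
      have hb : b = 0 := by
        have : b * (a + e + 1) = 0 := by ring_nf; ring_nf at h01; linarith [h01]
        rcases mul_eq_zero.mp this with h | h
        exacts [h, absurd h hs]
      have hc : c = 0 := by
        have : c * (a + e + 1) = 0 := by ring_nf; ring_nf at h10; linarith [h10]
        rcases mul_eq_zero.mp this with h | h
        exacts [h, absurd h hs]
      have hae : (a - e) * (a + e + 1) = 0 := by
        rw [hb] at h00; rw [hc] at h11; ring_nf; nlinarith [h00, h11]
      have : a = e := by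
        rcases mul_eq_zero.mp hae with h | h
        · omega
        · exact absurd h hs
      rw [hb] at h00
      nlinarith [h00, sq_nonneg (2*a+1)]
  constructor
  · exact htr
  · nlinarith [h00]

-- zero determinant difference implies equality
lemma eq_of_det_sub_eq_zero (A B : M2) (hA : A*A + A + 1 = 0) (hB : B*B + B + 1 = 0)
    (hc : A*B = B*A) (hd : Matrix.det (B - A) = 0) : B = A := by
  obtain ⟨heA, hbcA⟩ := rel_entries A hA
  obtain ⟨heB, hbcB⟩ := rel_entries B hB
  set a := A 0 0 with ha'; set b := A 0 1 with hb'; set c := A 1 0 with hc'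
  set m := B 0 0 with hm'; set n := B 0 1 with hn'; set p := B 1 0 with hp'
  have hcomm01 : n * (2*a+1) = b * (2*m+1) := by
    have h1 := congrFun (congrFun hc 0) 1
    simp only [Matrix.mul_apply, Fin.sum_univ_two] at h1
    rw [heA, heB] at h1
    ring_nf at h1 ⊢
    linarith [h1]
  have hcomm10 : c * (2*m+1) = p * (2*a+1) := by
    have h1 := congrFun (congrFun hc 1) 0
    simp only [Matrix.mul_apply, Fin.sum_univ_two] at h1
    rw [heA, heB] at h1
    ring_nf at h1 ⊢
    linarith [h1]
  have hdet : -(m-a)^2 - (n-b)*(p-c) = 0 := by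
    have h1 : Matrix.det (B - A) = (m-a)*((-1-m)-(-1-a)) - (n-b)*(p-c) := by
      rw [Matrix.det_fin_two]
      simp only [Matrix.sub_apply]
      rw [heA, heB]
    rw [h1] at hd
    ring_nf at hd ⊢
    linarith [hd]
  -- r = m - a = 0
  have hr : m = a := by
    have e1 : (n-b)*(2*a+1) = 2*b*(m-a) := by linear_combination hcomm01
    have e2 : (p-c)*(2*a+1) = 2*c*(m-a) := by linear_combination -hcomm10
    have e3 : ((n-b)*(p-c))*(2*a+1)^2 = 4*(b*c)*(m-a)^2 := by
      linear_combination ((p-c)*(2*a+1)) * e1 + (2*b*(m-a)) * e2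
    have key : (m-a)^2 * 3 = 0 := by
      linear_combination e3 + (2*a+1)^2 * hdet + 4*(m-a)^2 * hbcA
    have : (m-a)^2 = 0 := by omega
    have := pow_eq_zero_iff (n := 2) (by norm_num) |>.mp this
    omega
  have hs : n = b := by
    have h1 : n * (2*a+1) = b * (2*a+1) := by rw [hcomm01, hr]
    have h2 : (2*a+1) ≠ 0 := by omega
    have := mul_right_cancel₀ h2 h1
    exact this
  have hu : p = c := by
    have h1 : c * (2*a+1) = p * (2*a+1) := by rw [← hr] at hcomm10 ⊢; exact hcomm10
    have h2 : (2*a+1) ≠ 0 := by omega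
    exact (mul_right_cancel₀ h2 h1).symm
  rw [Matrix.eta_fin_two B, Matrix.eta_fin_two A, heA, heB, ← ha', ← hb', ← hc', ← hm', ← hn', ← hp', hr, hs, hu]

lemma comm_classify (A B : M2) (hA : A*A + A + 1 = 0) (hB : B*B + B + 1 = 0)
    (hc : A*B = B*A) : B = A ∨ B = A*A := by
  have hA2 : A*A = -A - 1 := by
    have : A*A + A + 1 - (A + 1) = 0 - (A+1) := by rw [hA]
    calc A*A = A*A + A + 1 - (A+1) := by noncomm_ring
      _ = 0 - (A+1) := this
      _ = -A - 1 := by noncomm_ring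
  have hB2 : B*B = -B - 1 := by
    have : B*B + B + 1 - (B + 1) = 0 - (B+1) := by rw [hB]
    calc B*B = B*B + B + 1 - (B+1) := by noncomm_ring
      _ = 0 - (B+1) := this
      _ = -B - 1 := by noncomm_ring
  have hA3 : A*(A*A) = 1 := by
    calc A*(A*A) = A*(-A-1) := by rw [hA2]
      _ = -(A*A) - A := by noncomm_ring
      _ = -(-A-1) - A := by rw [hA2]
      _ = 1 := by noncomm_ring
  have h0 : (B - A) * (B - A*A) = 0 := by
    calc (B - A)*(B - A*A) = B*B - B*(A*A) - A*B + A*(A*A) := by noncomm_ring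
      _ = (-B-1) - B*(A*A) - B*A + 1 := by rw [hB2, hA3, hc]
      _ = -B - B*(A*A + A) := by noncomm_ring
      _ = -B - B*(-1) := by rw [show A*A + A = (-1 : M2) by rw [hA2]; noncomm_ring]
      _ = 0 := by noncomm_ring
  have hdet0 : Matrix.det (B - A) * Matrix.det (B - A*A) = 0 := by
    rw [← Matrix.det_mul, h0, Matrix.det_zero]
  have hAA : (A*A)*(A*A) + (A*A) + 1 = 0 := by
    calc (A*A)*(A*A) + (A*A) + 1 = A*(A*(A*A)) + A*A + 1 := by noncomm_ring
      _ = A*1 + A*A + 1 := by rw [hA3]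
      _ = A*A + A + 1 := by noncomm_ring
      _ = 0 := hA
  have hcomm2 : (A*A)*B = B*(A*A) := by
    calc (A*A)*B = A*(A*B) := by noncomm_ring
      _ = A*(B*A) := by rw [hc]
      _ = (A*B)*A := by noncomm_ring
      _ = (B*A)*A := by rw [hc]
      _ = B*(A*A) := by noncomm_ring
  rcases mul_eq_zero.mp hdet0 with h | h
  · left; exact eq_of_det_sub_eq_zero A B hA hB hc h
  · right; exact eq_of_det_sub_eq_zero (A*A) B hAA hB hcomm2 h

def Cgl : G2 := ⟨!![0,-1;1,-1], !![-1,1;-1,0], by decide, by decide⟩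
def Su : G2 := ⟨!![0,-1;1,0], !![0,1;-1,0], by decide, by decide⟩
def Ju : G2 := ⟨!![1,0;0,-1], !![1,0;0,-1], by decide, by decide⟩
def Tu (k : ℤ) : G2 :=
  ⟨!![1,-k;0,1], !![1,k;0,1],
   by ext i j; fin_cases i <;> fin_cases j <;> simp [Matrix.mul_apply, Fin.sum_univ_two, Matrix.one_apply],
   by ext i j; fin_cases i <;> fin_cases j <;> simp [Matrix.mul_apply, Fin.sum_univ_two, Matrix.one_apply]⟩

lemma conj_val (g A : G2) : ((g*A*g⁻¹ : G2) : M2) = (g : M2) * (A : M2) * ((g⁻¹ : G2) : M2) := by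
  rw [Units.val_mul, Units.val_mul]

lemma conj_conj (h g A : G2) : h * (g*A*g⁻¹) * h⁻¹ = (h*g) * A * (h*g)⁻¹ := by group

lemma mrel_conj {u ui X : M2} (hui : u*ui = 1) (hiu : ui*u = 1) (hX : X*X+X+1 = 0) :
    (u*X*ui)*(u*X*ui) + (u*X*ui) + 1 = 0 := by
  have e : (u*X*ui)*(u*X*ui) = u*(X*X)*ui := by
    calc (u*X*ui)*(u*X*ui) = u*X*(ui*u)*(X*ui) := by noncomm_ring
      _ = u*X*1*(X*ui) := by rw [hiu]
      _ = u*(X*X)*ui := by noncomm_ring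
  have e2 : u*(X*X+X+1)*ui = u*(X*X)*ui + u*X*ui + u*ui := by noncomm_ring
  have e3 : u*(X*X+X+1)*ui = 0 := by rw [hX]; simp
  have e4 := e2.symm.trans e3
  rw [hui] at e4
  rw [e]
  exact e4

lemma rel_conj (g A : G2) (hA : (A:M2)*(A:M2) + (A:M2) + 1 = 0) :
    ((g*A*g⁻¹ : G2) : M2)*((g*A*g⁻¹ : G2) : M2) + ((g*A*g⁻¹ : G2) : M2) + 1 = 0 := by
  rw [conj_val]
  exact mrel_conj (by rw [← Units.val_mul, mul_inv_cancel]; rfl)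
    (by rw [← Units.val_mul, inv_mul_cancel]; rfl) hA

lemma T_conj (k : ℤ) (X : M2) : !![1,-k;0,1] * X * !![1,k;0,1] =
    !![X 0 0 - k * X 1 0, k*(X 0 0 - k*X 1 0) + X 0 1 - k*X 1 1; X 1 0, X 1 0 * k + X 1 1] := by
  ext i j; fin_cases i <;> fin_cases j <;> simp [Matrix.mul_apply, Matrix.vecMul, dotProduct, Fin.sum_univ_two] <;> ring

lemma S_conj (X : M2) : !![0,-1;1,0] * X * !![0,1;-1,0] =
    !![X 1 1, -(X 1 0); -(X 0 1), X 0 0] := by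
  ext i j; fin_cases i <;> fin_cases j <;> simp [Matrix.mul_apply, Matrix.vecMul, dotProduct, Fin.sum_univ_two] <;> ring

lemma J_conj (X : M2) : !![1,0;0,-1] * X * !![1,0;0,-1] =
    !![X 0 0, -(X 0 1); -(X 1 0), X 1 1] := by
  ext i j; fin_cases i <;> fin_cases j <;> simp [Matrix.mul_apply, Matrix.vecMul, dotProduct, Fin.sum_univ_two] <;> ring

lemma near_mult (a c : ℤ) (hc : c ≠ 0) : ∃ k : ℤ, 2 * (a - k*c).natAbs ≤ c.natAbs := by
  have hmod : a - (a/c)*c = a % c := by rw [Int.emod_def]; ring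
  have hr0 : 0 ≤ a % c := Int.emod_nonneg a hc
  have hrlt : a % c < |c| := by rw [Int.abs_eq_natAbs]; exact Int.emod_lt a hc
  rcases le_or_gt (2*(a % c).natAbs) c.natAbs with h | h
  · refine ⟨a / c, ?_⟩
    rw [hmod]; exact h
  · rcases lt_or_gt_of_ne hc with hneg | hpos
    · refine ⟨a / c - 1, ?_⟩
      have he : a - (a/c - 1)*c = a % c + c := by rw [← hmod]; ring
      rw [he]
      rw [abs_of_neg hneg] at hrlt
      omega
    · refine ⟨a / c + 1, ?_⟩
      have he : a - (a/c + 1)*c = a % c - c := by rw [← hmod]; ring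
      rw [he]
      rw [abs_of_pos hpos] at hrlt
      omega

lemma bound_lemma (x B c : ℤ) (h : B * c = -(x^2 + x + 1)) (h2 : 2 * x.natAbs ≤ c.natAbs)
    (h3 : 2 ≤ c.natAbs) : B.natAbs < c.natAbs := by
  have hpos : 0 ≤ x^2 + x + 1 := by nlinarith [sq_nonneg (2*x+1)]
  have habs : |B| * |c| = x^2 + x + 1 := by
    rw [← abs_mul, h, abs_neg, abs_of_nonneg hpos]
  have h2' : 2 * |x| ≤ |c| := by
    rw [Int.abs_eq_natAbs, Int.abs_eq_natAbs]; exact_mod_cast h2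
  have h3' : 2 ≤ |c| := by rw [Int.abs_eq_natAbs]; exact_mod_cast h3
  have hgoal : |B| < |c| := by
    nlinarith [habs, h2', h3', sq_abs x, le_abs_self x, neg_abs_le x, abs_nonneg B, abs_nonneg c,
      abs_nonneg x]
  rw [Int.abs_eq_natAbs, Int.abs_eq_natAbs] at hgoal
  exact_mod_cast hgoal

-- solve the case where lower-left entry is 1
lemma solve_c1 (A : G2) (hA : (A:M2)*(A:M2) + (A:M2) + 1 = 0) (hc : (A:M2) 1 0 = 1) :
    ∃ g : G2, g * A * g⁻¹ = Cgl := by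
  obtain ⟨he, hbc⟩ := rel_entries (A:M2) hA
  refine ⟨Tu ((A:M2) 0 0), ?_⟩
  apply Units.ext
  rw [conj_val]
  show (!![1,-((A:M2) 0 0);0,1] : M2) * (A:M2) * !![1,((A:M2) 0 0);0,1] = !![0,-1;1,-1]
  rw [T_conj]
  rw [hc, he]
  rw [hc, mul_one] at hbc
  ext i j
  fin_cases i <;> fin_cases j <;> simp <;> linear_combination hbc

lemma conj_to_C_aux : ∀ N : ℕ, ∀ A : G2, ((A:M2)*(A:M2) + (A:M2) + 1 = 0) →
    ((A:M2) 1 0).natAbs ≤ N → ∃ g : G2, g * A * g⁻¹ = Cgl := by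
  intro N
  induction N using Nat.strong_induction_on with
  | _ N IH =>
    intro A hA hN
    obtain ⟨he, hbc⟩ := rel_entries (A:M2) hA
    have hc0 : (A:M2) 1 0 ≠ 0 := by
      intro h
      rw [h, mul_zero] at hbc
      nlinarith [sq_nonneg (2*((A:M2) 0 0)+1), hbc]
    rcases Nat.lt_or_ge ((A:M2) 1 0).natAbs 2 with hsmall | hbig
    · -- |c| = 1
      have : (A:M2) 1 0 = 1 ∨ (A:M2) 1 0 = -1 := by omega
      rcases this with h1 | h1
      · exact solve_c1 A hA h1
      · -- conjugate by J first
        set A' := Ju * A * Ju⁻¹ with hA'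
        have hrel' := rel_conj Ju A hA
        have hval : (A' : M2) = !![(A:M2) 0 0, -((A:M2) 0 1); -((A:M2) 1 0), (A:M2) 1 1] := by
          rw [hA', conj_val]
          show (!![1,0;0,-1] : M2) * (A:M2) * !![1,0;0,-1] = _
          exact J_conj (A:M2)
        have hc' : (A' : M2) 1 0 = 1 := by rw [hval]; simp [h1]
        obtain ⟨g, hg⟩ := solve_c1 A' (by rw [hA']; exact hrel') hc'
        exact ⟨g * Ju, by rw [← conj_conj, ← hA', hg]⟩
    · -- |c| ≥ 2 : reduce
      obtain ⟨k, hk⟩ := near_mult ((A:M2) 0 0) ((A:M2) 1 0) hc0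
      set A₁ := Tu k * A * (Tu k)⁻¹ with hA₁
      have hrel₁ : (A₁:M2)*(A₁:M2) + (A₁:M2) + 1 = 0 := by rw [hA₁]; exact rel_conj _ A hA
      have hval₁ : (A₁ : M2) = !![(A:M2) 0 0 - k * (A:M2) 1 0,
          k*((A:M2) 0 0 - k*(A:M2) 1 0) + (A:M2) 0 1 - k*(A:M2) 1 1;
          (A:M2) 1 0, (A:M2) 1 0 * k + (A:M2) 1 1] := by
        rw [hA₁, conj_val]
        show (!![1,-k;0,1] : M2) * (A:M2) * !![1,k;0,1] = _
        exact T_conj k (A:M2)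
      have h₁00 : (A₁ : M2) 0 0 = (A:M2) 0 0 - k * (A:M2) 1 0 := by rw [hval₁]; simp
      have h₁10 : (A₁ : M2) 1 0 = (A:M2) 1 0 := by rw [hval₁]; simp
      obtain ⟨he₁, hbc₁⟩ := rel_entries (A₁:M2) hrel₁
      set A₂ := Su * A₁ * Su⁻¹ with hA₂
      have hrel₂ : (A₂:M2)*(A₂:M2) + (A₂:M2) + 1 = 0 := by rw [hA₂]; exact rel_conj _ A₁ hrel₁
      have hval₂ : (A₂ : M2) = !![(A₁:M2) 1 1, -((A₁:M2) 1 0); -((A₁:M2) 0 1), (A₁:M2) 0 0] := by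
        rw [hA₂, conj_val]
        show (!![0,-1;1,0] : M2) * (A₁:M2) * !![0,1;-1,0] = _
        exact S_conj (A₁:M2)
      have h₂10 : (A₂ : M2) 1 0 = -((A₁:M2) 0 1) := by rw [hval₂]; simp
      have hlt : ((A₂ : M2) 1 0).natAbs < ((A:M2) 1 0).natAbs := by
        rw [h₂10, Int.natAbs_neg]
        apply bound_lemma ((A₁:M2) 0 0) ((A₁:M2) 0 1) ((A:M2) 1 0)
        · rw [← h₁10]; linarith [hbc₁]
        · rw [h₁00]; exact hk
        · exact hbig
      obtain ⟨g, hg⟩ := IH ((A₂ : M2) 1 0).natAbs (lt_of_lt_of_le hlt hN) A₂ hrel₂ le_rfl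
      refine ⟨g * (Su * Tu k), ?_⟩
      rw [← conj_conj g (Su * Tu k) A, ← conj_conj Su (Tu k) A, ← hA₁, ← hA₂]
      exact hg


lemma conj_to_C (A : G2) (hA : (A:M2)*(A:M2) + (A:M2) + 1 = 0) :
    ∃ g : G2, g * A * g⁻¹ = Cgl :=
  conj_to_C_aux ((A:M2) 1 0).natAbs A hA le_rfl

lemma gconj_pow (g a : G2) (m : ℕ) : (g*a*g⁻¹)^m = g*a^m*g⁻¹ := by
  induction m with
  | zero => simp
  | succ m ih => rw [pow_succ, pow_succ, ih]; group

lemma cube_of_three_pow : ∀ (k : ℕ) (A : G2), A^(3^k) = 1 → A^3 = 1 := by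
  intro k
  induction k with
  | zero => intro A h; simp at h; rw [h]; simp
  | succ k ih =>
    intro A h
    have h3 : (A^3)^(3^k) = 1 := by
      rw [← pow_mul, show 3 * 3^k = 3^(k+1) from (pow_succ' 3 k).symm, h]
    have h9 : A^9 = 1 := by
      have := ih (A^3) h3
      rw [← pow_mul] at this
      exact this
    exact pow9_imp_pow3 A h9

lemma cube_of_pporder (A : G2) (h : ∃ k, orderOf A = 3^k) : A^3 = 1 := by
  obtain ⟨k, hk⟩ := h
  apply cube_of_three_pow k A
  rw [← hk]
  exact pow_orderOf_eq_one A

lemma classify (c x : G2) (hc3 : c^3=1) (hc1 : c ≠ 1) (hx3 : x^3=1) (hcx : Commute c x) :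
    x = 1 ∨ x = c ∨ x = c*c := by
  by_cases hx1 : x = 1
  · left; exact hx1
  right
  have hcr := order3_rel c hc3 hc1
  have hxr := order3_rel x hx3 hx1
  have hcm : (c:M2)*(x:M2) = (x:M2)*(c:M2) := by
    have := congrArg Units.val hcx.eq
    rwa [Units.val_mul, Units.val_mul] at this
  rcases comm_classify (c:M2) (x:M2) hcr hxr hcm with h | h
  · left; exact Units.ext h
  · right; apply Units.ext; rw [Units.val_mul]; exact h

def expOf (c x : G2) : ZMod 3 :=
  if x = 1 then 0 else if x = c then 1 else 2

lemma rep_lemma (c x : G2) (hc3 : c^3=1) (hc1 : c ≠ 1) (hx3 : x^3=1) (hcx : Commute c x) :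
    x = c ^ (expOf c x).val := by
  unfold expOf
  split_ifs with h1 h2
  · rw [show ((0:ZMod 3)).val = 0 from rfl, pow_zero]; exact h1
  · rw [show ((1:ZMod 3)).val = 1 from rfl, pow_one]; exact h2
  · rcases classify c x hc3 hc1 hx3 hcx with h | h | h
    · exact absurd h h1
    · exact absurd h h2
    · rw [h]; rw [show ((2:ZMod 3)).val = 2 from rfl, pow_two]

lemma conj_eq_iff (g x y : G2) : g*x*g⁻¹ = y ↔ x = g⁻¹*y*g := by
  constructor
  · intro h; rw [← h]; group
  · intro h; rw [h]; group

lemma expOf_conj (g c x : G2) : expOf (g*c*g⁻¹) (g*x*g⁻¹) = expOf c x := by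
  unfold expOf
  have h1 : (g*x*g⁻¹ = 1) ↔ x = 1 := by rw [conj_eq_iff]; simp
  have h2 : (g*x*g⁻¹ = g*c*g⁻¹) ↔ x = c := by
    constructor
    · intro h
      have h' := mul_right_cancel h
      exact mul_left_cancel h'
    · intro h; rw [h]
  simp only [h1, h2]

lemma expOf_sq (c x : G2) (hc3 : c^3 = 1) (hc1 : c ≠ 1) (hx : x = 1 ∨ x = c ∨ x = c*c) :
    expOf (c*c) x = - expOf c x := by
  have hcc1 : c*c ≠ 1 := by
    intro h
    apply hc1
    have h3 := hc3
    rw [pow_succ, pow_two, h, one_mul] at h3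
    exact h3
  have hccc : c*c ≠ c := by
    intro h
    apply hc1
    have h' : c * c = c * 1 := by rw [h, mul_one]
    exact mul_left_cancel h'
  unfold expOf
  rcases hx with h | h | h <;> rw [h] <;> simp [hcc1, hccc, hc1, hccc.symm ] <;> decide

def Spr : G2 := ⟨!![0,1;1,0], !![0,1;1,0], by decide, by decide⟩

lemma Spr_conj : Spr * Cgl * Spr⁻¹ = Cgl * Cgl := by decide

lemma conj_order3 (c c' : G2) (hc3 : c^3 = 1) (hc1 : c ≠ 1) (hc3' : c'^3 = 1) (hc1' : c' ≠ 1) :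
    ∃ h : G2, h * c * h⁻¹ = c' := by
  obtain ⟨g1, hg1⟩ := conj_to_C c (order3_rel c hc3 hc1)
  obtain ⟨g2, hg2⟩ := conj_to_C c' (order3_rel c' hc3' hc1')
  refine ⟨g2⁻¹ * g1, ?_⟩
  rw [conj_eq_iff] at hg1 hg2
  rw [hg1, hg2]
  group

lemma conj_sq (c : G2) (hc3 : c^3 = 1) (hc1 : c ≠ 1) : ∃ s : G2, s * c * s⁻¹ = c * c := by
  obtain ⟨g, hg⟩ := conj_to_C c (order3_rel c hc3 hc1)
  refine ⟨g⁻¹ * Spr * g, ?_⟩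
  have hc : c = g⁻¹ * Cgl * g := by rw [conj_eq_iff] at hg; exact hg
  rw [hc]
  have := Spr_conj
  calc (g⁻¹ * Spr * g) * (g⁻¹ * Cgl * g) * (g⁻¹ * Spr * g)⁻¹
      = g⁻¹ * (Spr * Cgl * Spr⁻¹) * g := by group
    _ = g⁻¹ * (Cgl * Cgl) * g := by rw [Spr_conj]
    _ = (g⁻¹ * Cgl * g) * (g⁻¹ * Cgl * g) := by group

lemma neg_val_pow (d : G2) (hd : d^3 = 1) (x : ZMod 3) : d^((-x).val) = (d*d)^(x.val) := by
  have hx : x = 0 ∨ x = 1 ∨ x = 2 := by revert x; decide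
  rcases hx with h | h | h <;> rw [h]
  · simp
  · rw [show (-(1:ZMod 3)).val = 2 from rfl, show ((1:ZMod 3)).val = 1 from rfl, pow_one, pow_two]
  · rw [show (-(2:ZMod 3)).val = 1 from rfl, show ((2:ZMod 3)).val = 2 from rfl, pow_one]
    calc d = 1 * d := (one_mul d).symm
      _ = d^3 * d := by rw [hd]
      _ = (d*d)^2 := by rw [pow_succ, pow_two, pow_two]; group

-- axioms standing in for already-proved results

section counting

variable {n : ℕ}

noncomputable def tc (v : pTuples G2 3 n) : Fin n → ZMod 3 :=
  if h : ∃ i, v.1 i ≠ 1 then fun j => expOf (v.1 h.choose) (v.1 j) else 0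

lemma mem_cube (v : pTuples G2 3 n) (i : Fin n) : (v.1 i)^3 = 1 :=
  cube_of_pporder _ (v.2.2 i)

lemma expOf_self {c : G2} (hc : c ≠ 1) : expOf c c = 1 := by
  unfold expOf
  rw [if_neg hc, if_pos rfl]

lemma expOf_ne_zero {c x : G2} (hx : x ≠ 1) : expOf c x ≠ 0 := by
  unfold expOf
  split_ifs
  · exact absurd ‹x = 1› hx
  · decide
  · decide

lemma tc_rep (v : pTuples G2 3 n) (h : ∃ i, v.1 i ≠ 1) (j : Fin n) :
    v.1 j = (v.1 h.choose) ^ (tc v j).val := by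
  unfold tc
  rw [dif_pos h]
  exact rep_lemma _ _ (mem_cube v _) h.choose_spec (mem_cube v _) (v.2.1 _ _)

lemma tc_eq_zero_iff (v : pTuples G2 3 n) : tc v = 0 ↔ ∀ i, v.1 i = 1 := by
  constructor
  · intro h i
    by_contra hi
    have hex : ∃ i, v.1 i ≠ 1 := ⟨i, hi⟩
    have : tc v hex.choose = 0 := by rw [h]; rfl
    unfold tc at this
    rw [dif_pos hex] at this
    exact expOf_ne_zero hex.choose_spec this
  · intro h
    unfold tc
    rw [dif_neg]
    push_neg
    exact h

lemma tc_sound (v w : pTuples G2 3 n) (h : tupleConj (pTuples G2 3 n) v w) :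
    (MulAction.orbitRel (ZMod 3)ˣ (Fin n → ZMod 3)).r (tc v) (tc w) := by
  obtain ⟨g, hg⟩ := h
  change tc v ∈ MulAction.orbit _ (tc w)
  rw [MulAction.mem_orbit_iff]
  by_cases hv : ∃ i, v.1 i ≠ 1
  · -- nontrivial case
    have hw : ∃ i, w.1 i ≠ 1 := by
      refine ⟨hv.choose, ?_⟩
      rw [← hg]
      intro hcon
      apply hv.choose_spec
      have := congrArg (fun z => g⁻¹ * z * g) hcon
      simpa [mul_assoc] using this
    set c := v.1 hv.choose with hc
    have hc1 : c ≠ 1 := hv.choose_spec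
    have hc3 : c^3 = 1 := mem_cube v _
    set c' := w.1 hw.choose with hc'
    have hc1' : c' ≠ 1 := hw.choose_spec
    have hc3' : c'^3 = 1 := mem_cube w _
    have hcw : c' = g * (v.1 hw.choose) * g⁻¹ := (hg _).symm
    have hvj : v.1 hw.choose ≠ 1 := by
      intro hcon
      apply hc1'
      rw [hcw, hcon]
      group
    have hcls := classify c (v.1 hw.choose) hc3 hc1 (mem_cube v _) (v.2.1 _ _)
    have htv : tc v = fun j => expOf c (v.1 j) := by unfold tc; rw [dif_pos hv]
    have htw : tc w = fun j => expOf c' (w.1 j) := by unfold tc; rw [dif_pos hw]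
    rcases hcls with hcase | hcase | hcase
    · exact absurd hcase hvj
    · -- c' = g c g⁻¹ : classes equal, use u = 1
      refine ⟨1, ?_⟩
      rw [one_smul, htv, htw]
      funext j
      rw [← hg j, hcw, hcase, expOf_conj]
    · -- c' = g (c*c) g⁻¹
      refine ⟨-1, ?_⟩
      rw [htv, htw]
      funext j
      have hj : (expOf c' (w.1 j)) = - expOf c (v.1 j) := by
        rw [← hg j, hcw, hcase, expOf_conj]
        exact expOf_sq c (v.1 j) hc3 hc1 (classify c (v.1 j) hc3 hc1 (mem_cube v j) (v.2.1 _ _))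
      have : ((-1 : (ZMod 3)ˣ) : ZMod 3) = -1 := rfl
      simp [Pi.smul_apply, Units.smul_def, hj, this]
  · -- trivial case
    have hv' : ∀ i, v.1 i = 1 := by push_neg at hv; exact hv
    have hw' : ∀ i, w.1 i = 1 := by
      intro i
      rw [← hg i, hv' i]
      group
    refine ⟨1, ?_⟩
    rw [one_smul, (tc_eq_zero_iff v).mpr hv', (tc_eq_zero_iff w).mpr hw']

lemma tc_inj (v w : pTuples G2 3 n)
    (h : (MulAction.orbitRel (ZMod 3)ˣ (Fin n → ZMod 3)).r (tc v) (tc w)) :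
    tupleConj (pTuples G2 3 n) v w := by
  change tc v ∈ MulAction.orbit _ (tc w) at h
  rw [MulAction.mem_orbit_iff] at h
  obtain ⟨u, hu⟩ := h
  have hu2' : ∀ z : (ZMod 3)ˣ, z = 1 ∨ z = -1 := by decide
  have hu2 := hu2' u
  by_cases hv : ∃ i, v.1 i ≠ 1
  · -- nontrivial
    have hvne : tc v ≠ 0 := by
      intro h0
      exact hv.choose_spec ((tc_eq_zero_iff v).mp h0 _)
    have hwne : tc w ≠ 0 := by
      intro h0
      rw [h0, smul_zero] at hu
      exact hvne hu.symm
    have hw : ∃ i, w.1 i ≠ 1 := by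
      by_contra hcon
      push_neg at hcon
      exact hwne ((tc_eq_zero_iff w).mpr hcon)
    set c := v.1 hv.choose with hc
    have hc1 : c ≠ 1 := hv.choose_spec
    have hc3 : c^3 = 1 := mem_cube v _
    set c' := w.1 hw.choose with hc'
    have hc1' : c' ≠ 1 := hw.choose_spec
    have hc3' : c'^3 = 1 := mem_cube w _
    obtain ⟨h0, hh0⟩ := conj_order3 c c' hc3 hc1 hc3' hc1'
    have hrv : ∀ j, v.1 j = c ^ (tc v j).val := tc_rep v hv
    have hrw : ∀ j, w.1 j = c' ^ (tc w j).val := tc_rep w hw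
    rcases hu2 with hu1 | hu1
    · -- same exponents
      rw [hu1, one_smul] at hu
      refine ⟨h0, fun i => ?_⟩
      rw [hrv i, hrw i, ← hu, ← hh0, gconj_pow]
    · -- opposite exponents
      rw [hu1] at hu
      have hptw : ∀ j, tc w j = - tc v j := by
        intro j
        have := congrFun hu j
        have h' : ((-1 : (ZMod 3)ˣ) : ZMod 3) = -1 := rfl
        simp [Pi.smul_apply, Units.smul_def, h'] at this
        rw [← this]
        simp
      obtain ⟨s, hs⟩ := conj_sq c' hc3' hc1'
      refine ⟨s * h0, fun i => ?_⟩
      have hγ : (s * h0) * c * (s * h0)⁻¹ = c' * c' := by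
        rw [show (s * h0) * c * (s * h0)⁻¹ = s * (h0 * c * h0⁻¹) * s⁻¹ by group, hh0, hs]
      rw [hrv i, hrw i, hptw i, neg_val_pow c' hc3', ← hγ, gconj_pow]
  · -- trivial
    have hv' : ∀ i, v.1 i = 1 := by push_neg at hv; exact hv
    have h0v : tc v = 0 := (tc_eq_zero_iff v).mpr hv'
    have h0w : tc w = 0 := by
      funext j
      have h1 := congrFun hu j
      rw [h0v] at h1
      have h2 : (u : ZMod 3) * tc w j = 0 := by
        simpa [Pi.smul_apply, Units.smul_def] using h1
      exact (Units.mul_right_eq_zero u).mp h2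
    have hw' := (tc_eq_zero_iff w).mp h0w
    exact ⟨1, fun i => by rw [hv' i, hw' i]; group⟩

lemma cgl_cube : Cgl^3 = 1 := by decide

lemma cgl_pow_ne (x : ZMod 3) (hx : x ≠ 0) : Cgl ^ x.val ≠ 1 := by revert x; decide

lemma cgl_pow_eq_one_iff (x : ZMod 3) : Cgl ^ x.val = 1 ↔ x = 0 := by revert x; decide

lemma exp_one (x : ZMod 3) : expOf (Cgl^((1:ZMod 3)).val) (Cgl^x.val) = x := by revert x; decide

lemma exp_two (x : ZMod 3) : expOf (Cgl^((2:ZMod 3)).val) (Cgl^x.val) = -x := by revert x; decide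

lemma tc_surj (f : Fin n → ZMod 3) :
    ∃ v : pTuples G2 3 n, (MulAction.orbitRel (ZMod 3)ˣ (Fin n → ZMod 3)).r (tc v) f := by
  have mem : (fun j => Cgl ^ (f j).val) ∈ pTuples G2 3 n := by
    constructor
    · intro i j
      exact (Commute.refl Cgl).pow_pow _ _
    · intro i
      have h3 : (Cgl ^ (f i).val)^3 = 1 := by
        rw [← pow_mul, mul_comm, pow_mul, cgl_cube, one_pow]
      have hdvd := orderOf_dvd_of_pow_eq_one h3
      rcases (Nat.dvd_prime Nat.prime_three).mp hdvd with h | h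
      · exact ⟨0, by simpa using h⟩
      · exact ⟨1, by simpa using h⟩
  refine ⟨⟨fun j => Cgl ^ (f j).val, mem⟩, ?_⟩
  change tc _ ∈ MulAction.orbit _ f
  rw [MulAction.mem_orbit_iff]
  by_cases hf : ∃ j, f j ≠ 0
  · have hvex : ∃ i, (fun j => Cgl ^ (f j).val) i ≠ 1 := ⟨hf.choose, cgl_pow_ne _ hf.choose_spec⟩
    have htc : tc ⟨fun j => Cgl ^ (f j).val, mem⟩ =
        fun j => expOf (Cgl ^ (f hvex.choose).val) (Cgl ^ (f j).val) := by
      unfold tc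
      rw [dif_pos hvex]
    have hne : f hvex.choose ≠ 0 := by
      intro h0
      apply hvex.choose_spec
      show Cgl ^ (f hvex.choose).val = 1
      rw [h0]
      rfl
    have hcases : f hvex.choose = 1 ∨ f hvex.choose = 2 := by
      revert hne
      generalize f hvex.choose = z
      revert z; decide
    rcases hcases with hcase | hcase
    · refine ⟨1, ?_⟩
      rw [one_smul, htc]
      funext j
      rw [hcase, exp_one]
    · refine ⟨-1, ?_⟩
      rw [htc]
      funext j
      have h' : ((-1 : (ZMod 3)ˣ) : ZMod 3) = -1 := rfl
      simp [Pi.smul_apply, Units.smul_def, h', hcase, exp_two]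
  · push_neg at hf
    refine ⟨1, ?_⟩
    rw [one_smul]
    have h0 : tc ⟨fun j => Cgl ^ (f j).val, mem⟩ = 0 := by
      apply (tc_eq_zero_iff _).mpr
      intro i
      show Cgl ^ (f i).val = 1
      rw [hf i]
      rfl
    rw [h0]
    funext j
    rw [hf j]
    rfl

end counting

lemma card_omega (n : ℕ) :
    2 * Nat.card (Quotient (MulAction.orbitRel (ZMod 3)ˣ (Fin n → ZMod 3))) = 3^n + 1 := by
  classical
  have hb := MulAction.sum_card_fixedBy_eq_card_orbits_mul_card_group (ZMod 3)ˣ (Fin n → ZMod 3)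
  have huniv : (Finset.univ : Finset (ZMod 3)ˣ) = {1, -1} := by decide
  rw [huniv, Finset.sum_insert (by decide), Finset.sum_singleton] at hb
  have e1 : Fintype.card (MulAction.fixedBy (Fin n → ZMod 3) (1 : (ZMod 3)ˣ)) = 3^n := by
    have h1 : MulAction.fixedBy (Fin n → ZMod 3) (1 : (ZMod 3)ˣ) = Set.univ := by
      ext f; simp [MulAction.mem_fixedBy]
    rw [← Nat.card_eq_fintype_card, h1, Nat.card_coe_set_eq, Set.ncard_univ,
      Nat.card_eq_fintype_card]
    simp [Fintype.card_fun, ZMod.card]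
  have e2 : Fintype.card (MulAction.fixedBy (Fin n → ZMod 3) ((-1) : (ZMod 3)ˣ)) = 1 := by
    have hpt : ∀ z : ZMod 3, ((-1 : (ZMod 3)ˣ) • z = z) ↔ z = 0 := by decide
    have h2 : MulAction.fixedBy (Fin n → ZMod 3) ((-1) : (ZMod 3)ˣ) = {0} := by
      ext f
      simp only [MulAction.mem_fixedBy, Set.mem_singleton_iff]
      constructor
      · intro h
        funext j
        have hj := congrFun h j
        have hj' : (-1 : (ZMod 3)ˣ) • f j = f j := by simpa using hj
        simpa using (hpt (f j)).mp hj'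
      · intro h
        rw [h, smul_zero]
    rw [← Nat.card_eq_fintype_card, h2, Nat.card_coe_set_eq, Set.ncard_singleton]
  have e3 : Fintype.card (ZMod 3)ˣ = 2 := by decide
  rw [e1, e2, e3] at hb
  rw [Nat.card_eq_fintype_card]
  omega

/-- Twice the number of orbits of `GL₂(ℤ)` acting by simultaneous conjugation on
`GL₂(ℤ)_{n,3}` equals `3ⁿ + 1`. -/
theorem gl2_orbit_count (n : ℕ) (hn : 1 ≤ n) :
    2 * Nat.card
        (Quot (tupleConj (pTuples (Matrix.GeneralLinearGroup (Fin 2) ℤ) 3 n))) =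
      3 ^ n + 1 := by
  classical
  have hcard : Nat.card (Quot (tupleConj (pTuples G2 3 n))) =
      Nat.card (Quotient (MulAction.orbitRel (ZMod 3)ˣ (Fin n → ZMod 3))) := by
    apply Nat.card_eq_of_bijective
      (Quot.lift (fun v : pTuples G2 3 n => (Quotient.mk _ (tc v)))
        (fun v w h => Quotient.sound (tc_sound v w h)))
    constructor
    · rintro ⟨v⟩ ⟨w⟩ h
      exact Quot.sound (tc_inj v w (Quotient.exact h))
    · rintro ⟨f⟩
      obtain ⟨v, hv⟩ := tc_surj f
      exact ⟨Quot.mk _ v, Quotient.sound hv⟩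
  rw [hcard]
  exact card_omega n
end
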